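/- arXiv:2504.09399 — 6 statements merged into one kernel-verified Lean document; each statement's English description precedes it below -/
import Mathlib

section
/- Suppose S = (a, e) is a k-rainbow sequence on Fin n such that every color in Fin k is attained by a on X (i.e., for all c ∈ Fin k there is x ∈ X with a(x) = c), and suppose i, j ∈ Fin n satisfy x ≤ i and x ≤ j for all x ∈ X, with i, j ∉ X. Then i and j have the same X-neighborhood in the associated rainbow threshold graph (i.e., for all x ∈ X, (i,x) is an edge iff (j,x) is an edge) if and only if e(i) = e(j). -/
/-- Rainbow threshold graph (set-of-colors version, general color type). -/
def rainGraph {X K : Type*} [LinearOrder X] (a : X → K) (e : X → Set K) :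
    SimpleGraph X where
  Adj x y := (x < y ∧ a x ∈ e y) ∨ (y < x ∧ a y ∈ e x)
  symm := ⟨by intro x y h; tauto⟩
  loopless := ⟨by rintro x (⟨h, -⟩ | ⟨h, -⟩) <;> exact absurd h (lt_irrefl x)⟩

theorem all_colors_left_determines_sets {n k : ℕ}
    (a : Fin n → Fin k) (e : Fin n → Set (Fin k)) (X : Set (Fin n))
    (hall : ∀ c : Fin k, ∃ x ∈ X, a x = c)
    (i j : Fin n) (hi : i ∉ X) (hj : j ∉ X)
    (hle : ∀ x ∈ X, x ≤ i ∧ x ≤ j) :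
    (∀ x ∈ X, ((rainGraph a e).Adj i x ↔ (rainGraph a e).Adj j x)) ↔
      e i = e j := by
  have key : ∀ x ∈ X, ((rainGraph a e).Adj i x ↔ a x ∈ e i) ∧
      ((rainGraph a e).Adj j x ↔ a x ∈ e j) := by
    intro x hx
    have hxi : x < i := lt_of_le_of_ne (hle x hx).1 (fun h => hi (h ▸ hx))
    have hxj : x < j := lt_of_le_of_ne (hle x hx).2 (fun h => hj (h ▸ hx))
    constructor <;> constructor
    · rintro (⟨h, -⟩ | ⟨-, h⟩)
      · exact absurd hxi (not_lt.2 h.le)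
      · exact h
    · intro h; exact Or.inr ⟨hxi, h⟩
    · rintro (⟨h, -⟩ | ⟨-, h⟩)
      · exact absurd hxj (not_lt.2 h.le)
      · exact h
    · intro h; exact Or.inr ⟨hxj, h⟩
  constructor
  · intro h
    ext c
    obtain ⟨x, hx, rfl⟩ := hall c
    have := (key x hx).1.symm.trans ((h x hx).trans (key x hx).2)
    exact this
  · intro h x hx
    rw [(key x hx).1, (key x hx).2, h]
end

section
/- Let G be a k-rainbow threshold graph on Fin n and let X ⊆ Fin n with |X| = m. Then the X-neighborhood equivalence relation on [n] \ X (where i ~ j iff for all c ∈ X, (i,c) is an edge iff (j,c) is an edge) has at most k · 2^k · (1 + m/2) equivalence classes. -/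
/-- Rainbow threshold graph with finsets of colors. -/
def rseqGraph {n k : ℕ} (a : Fin n → Fin k) (e : Fin n → Finset (Fin k)) :
    SimpleGraph (Fin n) where
  Adj x y := (x < y ∧ a x ∈ e y) ∨ (y < x ∧ a y ∈ e x)
  symm := ⟨by intro x y h; tauto⟩
  loopless := ⟨by rintro x (⟨h, -⟩ | ⟨h, -⟩) <;> exact absurd h (lt_irrefl x)⟩

instance {n k : ℕ} (a : Fin n → Fin k) (e : Fin n → Finset (Fin k)) :
    DecidableRel (rseqGraph a e).Adj := fun x y =>
  inferInstanceAs (Decidable ((x < y ∧ a x ∈ e y) ∨ (y < x ∧ a y ∈ e x)))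

/-- For a sequence `P` on `{0,…,m}`, the number of distinct values is at most
one plus the number of indices where the value changes. -/
lemma chain_image_card {α : Type*} [DecidableEq α] (P : ℕ → α) (m : ℕ) :
    ((Finset.range (m+1)).image P).card ≤
      1 + ((Finset.range m).filter (fun j => P (j+1) ≠ P j)).card := by
  induction m with
  | zero => simp
  | succ m ih =>
    have h1 : (Finset.range (m+1+1)).image P = insert (P (m+1)) ((Finset.range (m+1)).image P) := by
      rw [Finset.range_add_one, Finset.image_insert]
    have h2 : ((Finset.range (m+1)).filter (fun j => P (j+1) ≠ P j))
        = if P (m+1) ≠ P m then insert m ((Finset.range m).filter (fun j => P (j+1) ≠ P j))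
          else (Finset.range m).filter (fun j => P (j+1) ≠ P j) := by
      conv_lhs => rw [Finset.range_add_one]
      rw [Finset.filter_insert]
    by_cases h : P (m+1) = P m
    · rw [h1, h2, if_neg (by simp [h]),
        Finset.card_insert_of_mem (h ▸ Finset.mem_image.2 ⟨m, Finset.self_mem_range_succ m, rfl⟩)]
      exact ih
    · rw [h1, h2, if_pos h]
      have hA : (insert (P (m+1)) ((Finset.range (m+1)).image P)).card
          ≤ ((Finset.range (m+1)).image P).card + 1 := Finset.card_insert_le _ _
      have hB : (insert m ((Finset.range m).filter (fun j => P (j+1) ≠ P j))).card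
          = ((Finset.range m).filter (fun j => P (j+1) ≠ P j)).card + 1 :=
        Finset.card_insert_of_notMem (by simp)
      omega

/-- Number of subsets of `Fin k` not containing a fixed element. -/
lemma card_filter_not_mem {k : ℕ} (x : Fin k) :
    (Finset.univ.filter (fun E : Finset (Fin k) => x ∉ E)).card = 2 ^ (k - 1) := by
  have h : (Finset.univ.filter (fun E : Finset (Fin k) => x ∉ E))
      = ((Finset.univ : Finset (Fin k)).erase x).powerset := by
    ext E
    simp [Finset.subset_erase]
  rw [h, Finset.card_powerset, Finset.card_erase_of_mem (Finset.mem_univ x),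
    Finset.card_univ, Fintype.card_fin]

lemma card_filter_mem {k : ℕ} (x : Fin k) :
    (Finset.univ.filter (fun E : Finset (Fin k) => x ∈ E)).card = 2 ^ (k - 1) := by
  classical
  have hk : 0 < k := lt_of_le_of_lt (Nat.zero_le _) x.isLt
  have htot := Finset.card_filter_add_card_filter_not
    (s := (Finset.univ : Finset (Finset (Fin k)))) (p := fun E => x ∈ E)
  have hcard : (Finset.univ : Finset (Finset (Fin k))).card = 2 ^ k := by
    rw [Finset.card_univ, Fintype.card_finset, Fintype.card_fin]
  have hnot := card_filter_not_mem x
  have h2 : 2 ^ k = 2 ^ (k - 1) * 2 := by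
    rw [← pow_succ]
    congr 1
    omega
  simp only [hcard] at htot
  omega

set_option maxHeartbeats 1000000 in
theorem neighborhood_classes_upper_bound {n k m : ℕ}
    (a : Fin n → Fin k) (e : Fin n → Finset (Fin k))
    (X : Finset (Fin n)) (hm : X.card = m) :
    (((Xᶜ).image
        (fun i => X.filter (fun c => (rseqGraph a e).Adj i c))).card : ℚ) ≤
      k * 2 ^ k * (1 + (m : ℚ) / 2) := by
  classical
  set rank : Fin n → ℕ := fun c => (X.filter (· < c)).card with hrank
  set Ψ : Fin k × Finset (Fin k) → ℕ → Finset (Fin n) :=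
    fun p j => X.filter (fun c => (rank c < j ∧ a c ∈ p.2) ∨ (¬ rank c < j ∧ p.1 ∈ e c))
    with hΨ
  -- basic facts about rank
  have rank_lt : ∀ c ∈ X, ∀ i : Fin n, c < i → rank c < (X.filter (· < i)).card := by
    intro c hc i hci
    apply Finset.card_lt_card
    rw [Finset.ssubset_iff_of_subset
      (Finset.monotone_filter_right X (fun d _ hd => lt_trans hd hci))]
    exact ⟨c, Finset.mem_filter.2 ⟨hc, hci⟩, fun hmem => absurd (Finset.mem_filter.1 hmem).2
      (lt_irrefl c)⟩
  have le_rank : ∀ (i c : Fin n), i ≤ c → (X.filter (· < i)).card ≤ rank c := by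
    intro i c hic
    exact Finset.card_le_card (Finset.monotone_filter_right X (fun d _ hd => lt_of_lt_of_le hd hic))
  have rank_injOn : ∀ c ∈ X, ∀ d ∈ X, rank c = rank d → c = d := by
    intro c hc d hd hcd
    by_contra hne
    rcases lt_or_gt_of_ne hne with h | h
    · exact absurd hcd (Nat.ne_of_lt (rank_lt c hc d h))
    · exact absurd hcd.symm (Nat.ne_of_lt (rank_lt d hd c h))
  -- every value j < m is a rank of some element of X
  have rank_surj : ∀ j < m, ∃ c ∈ X, rank c = j := by
    have himg : X.image rank = Finset.range m := by
      apply Finset.eq_of_subset_of_card_le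
      · intro j hj
        obtain ⟨c, hc, rfl⟩ := Finset.mem_image.1 hj
        refine Finset.mem_range.2 ?_
        rw [← hm]
        apply Finset.card_lt_card
        rw [Finset.ssubset_iff_of_subset (Finset.filter_subset _ _)]
        exact ⟨c, hc, fun hmem => absurd (Finset.mem_filter.1 hmem).2 (lt_irrefl c)⟩
      · rw [Finset.card_range, Finset.card_image_of_injOn (fun c hc d hd => rank_injOn c hc d hd),
          hm]
    intro j hj
    have : j ∈ X.image rank := himg ▸ Finset.mem_range.2 hj
    obtain ⟨c, hc, hcj⟩ := Finset.mem_image.1 this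
    exact ⟨c, hc, hcj⟩
  -- Step 1: the image is covered by the Ψ patterns
  have hsub : (Xᶜ).image (fun i => X.filter (fun c => (rseqGraph a e).Adj i c)) ⊆
      Finset.univ.biUnion
        (fun p : Fin k × Finset (Fin k) => (Finset.range (m+1)).image (Ψ p)) := by
    intro s hs
    obtain ⟨i, hi, rfl⟩ := Finset.mem_image.1 hs
    have hiX : i ∉ X := by simpa using hi
    refine Finset.mem_biUnion.2 ⟨(a i, e i), Finset.mem_univ _,
      Finset.mem_image.2 ⟨(X.filter (· < i)).card, ?_, ?_⟩⟩
    · exact Finset.mem_range.2 (Nat.lt_succ_of_le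
        (hm ▸ Finset.card_le_card (Finset.filter_subset _ _)))
    · have hAdj : ∀ c, (rseqGraph a e).Adj i c ↔
          ((i < c ∧ a i ∈ e c) ∨ (c < i ∧ a c ∈ e i)) := fun c => Iff.rfl
      ext c
      simp only [Finset.mem_filter, hΨ, hAdj]
      constructor
      · rintro ⟨hc, hcond⟩
        refine ⟨hc, ?_⟩
        have hne : c ≠ i := fun h => hiX (h ▸ hc)
        rcases lt_or_gt_of_ne hne with h | h
        · rcases hcond with ⟨_, hmem⟩ | ⟨hnlt, _⟩
          · exact Or.inr ⟨h, hmem⟩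
          · exact absurd (rank_lt c hc i h) hnlt
        · rcases hcond with ⟨hlt, _⟩ | ⟨_, hmem⟩
          · exact absurd (le_rank i c (le_of_lt h)) (not_le.2 hlt)
          · exact Or.inl ⟨h, hmem⟩
      · rintro ⟨hc, hadj⟩
        refine ⟨hc, ?_⟩
        rcases hadj with ⟨hlt, hmem⟩ | ⟨hlt, hmem⟩
        · exact Or.inr ⟨not_lt.2 (le_rank i c (le_of_lt hlt)), hmem⟩
        · exact Or.inl ⟨rank_lt c hc i hlt, hmem⟩
  -- Step: a change in Ψ at step j forces a "flip" at the element of rank j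
  have flip_lemma : ∀ j, ∀ c0 ∈ X, rank c0 = j →
      ∀ p : Fin k × Finset (Fin k), Ψ p (j+1) ≠ Ψ p j → ¬ (p.1 ∈ e c0 ↔ a c0 ∈ p.2) := by
    intro j c0 hc0 hr0 p hne hiff
    apply hne
    ext c
    simp only [Finset.mem_filter, hΨ]
    constructor
    · rintro ⟨hc, hcond⟩
      refine ⟨hc, ?_⟩
      rcases lt_trichotomy (rank c) j with h | h | h
      · rcases hcond with ⟨_, hmem⟩ | ⟨hnlt, _⟩
        · exact Or.inl ⟨h, hmem⟩
        · omega
      · have : c = c0 := rank_injOn c hc c0 hc0 (h.trans hr0.symm)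
        subst this
        rcases hcond with ⟨_, hmem⟩ | ⟨hnlt, _⟩
        · exact Or.inr ⟨by omega, hiff.2 hmem⟩
        · omega
      · rcases hcond with ⟨hlt, _⟩ | ⟨_, hmem⟩
        · omega
        · exact Or.inr ⟨by omega, hmem⟩
    · rintro ⟨hc, hcond⟩
      refine ⟨hc, ?_⟩
      rcases lt_trichotomy (rank c) j with h | h | h
      · rcases hcond with ⟨_, hmem⟩ | ⟨hnlt, _⟩
        · exact Or.inl ⟨by omega, hmem⟩
        · omega
      · have : c = c0 := rank_injOn c hc c0 hc0 (h.trans hr0.symm)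
        subst this
        rcases hcond with ⟨hlt, _⟩ | ⟨_, hmem⟩
        · omega
        · exact Or.inl ⟨by omega, hiff.1 hmem⟩
      · rcases hcond with ⟨hlt, _⟩ | ⟨_, hmem⟩
        · omega
        · exact Or.inr ⟨by omega, hmem⟩
  -- counting flips at a fixed element
  have count_flip : ∀ c : Fin n,
      (Finset.univ.filter
        (fun p : Fin k × Finset (Fin k) => ¬ (p.1 ∈ e c ↔ a c ∈ p.2))).card ≤ k * 2 ^ (k-1) := by
    intro c
    rw [Finset.card_eq_sum_card_fiberwise
      (f := Prod.fst) (t := (Finset.univ : Finset (Fin k))) (fun x _ => Finset.mem_univ _)]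
    have hbound : ∀ b : Fin k,
        (((Finset.univ.filter
          (fun p : Fin k × Finset (Fin k) => ¬ (p.1 ∈ e c ↔ a c ∈ p.2))).filter
            (fun p => p.1 = b)).card) ≤ 2 ^ (k-1) := by
      intro b
      by_cases hb : b ∈ e c
      · calc _ ≤ (Finset.univ.filter (fun E : Finset (Fin k) => a c ∉ E)).card := by
              apply Finset.card_le_card_of_injOn Prod.snd
              · intro p hp
                simp only [Finset.mem_coe, Finset.mem_filter, Finset.mem_univ, true_and] at hp ⊢
                obtain ⟨hniff, hfst⟩ := hp
                subst hfst
                tauto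
              · intro p hp q hq hpq
                simp only [Finset.mem_coe, Finset.mem_filter, Finset.mem_univ,
                  true_and] at hp hq
                exact Prod.ext (hp.2.trans hq.2.symm) hpq
          _ = 2 ^ (k-1) := card_filter_not_mem _
      · calc _ ≤ (Finset.univ.filter (fun E : Finset (Fin k) => a c ∈ E)).card := by
              apply Finset.card_le_card_of_injOn Prod.snd
              · intro p hp
                simp only [Finset.mem_coe, Finset.mem_filter, Finset.mem_univ, true_and] at hp ⊢
                obtain ⟨hniff, hfst⟩ := hp
                subst hfst
                tauto
              · intro p hp q hq hpq
                simp only [Finset.mem_coe, Finset.mem_filter, Finset.mem_univ,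
                  true_and] at hp hq
                exact Prod.ext (hp.2.trans hq.2.symm) hpq
          _ = 2 ^ (k-1) := card_filter_mem _
    calc _ ≤ ∑ _b : Fin k, 2 ^ (k-1) := Finset.sum_le_sum (fun b _ => hbound b)
      _ = k * 2 ^ (k-1) := by simp [Finset.sum_const, Finset.card_univ, mul_comm]
  -- the main natural-number bound
  have main : ((Xᶜ).image (fun i => X.filter (fun c => (rseqGraph a e).Adj i c))).card ≤
      k * 2 ^ k + m * (k * 2 ^ (k-1)) := by
    calc ((Xᶜ).image (fun i => X.filter (fun c => (rseqGraph a e).Adj i c))).card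
        ≤ (Finset.univ.biUnion
            (fun p : Fin k × Finset (Fin k) => (Finset.range (m+1)).image (Ψ p))).card :=
          Finset.card_le_card hsub
      _ ≤ ∑ p : Fin k × Finset (Fin k), ((Finset.range (m+1)).image (Ψ p)).card :=
          Finset.card_biUnion_le
      _ ≤ ∑ p : Fin k × Finset (Fin k),
            (1 + ((Finset.range m).filter (fun j => Ψ p (j+1) ≠ Ψ p j)).card) :=
          Finset.sum_le_sum (fun p _ => chain_image_card (Ψ p) m)
      _ = k * 2 ^ k + ∑ p : Fin k × Finset (Fin k),
            ((Finset.range m).filter (fun j => Ψ p (j+1) ≠ Ψ p j)).card := by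
          rw [Finset.sum_add_distrib, Finset.sum_const, Finset.card_univ, Fintype.card_prod,
            Fintype.card_fin, Fintype.card_finset, Fintype.card_fin, smul_eq_mul, mul_one]
      _ ≤ k * 2 ^ k + m * (k * 2 ^ (k-1)) := by
          gcongr
          -- swap the sums
          have hswap : ∑ p : Fin k × Finset (Fin k),
              ((Finset.range m).filter (fun j => Ψ p (j+1) ≠ Ψ p j)).card
              = ∑ j ∈ Finset.range m,
                (Finset.univ.filter
                  (fun p : Fin k × Finset (Fin k) => Ψ p (j+1) ≠ Ψ p j)).card := by
            simp only [Finset.card_filter]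
            exact Finset.sum_comm
          rw [hswap]
          calc ∑ j ∈ Finset.range m,
                (Finset.univ.filter
                  (fun p : Fin k × Finset (Fin k) => Ψ p (j+1) ≠ Ψ p j)).card
              ≤ ∑ _j ∈ Finset.range m, k * 2 ^ (k-1) := by
                apply Finset.sum_le_sum
                intro j hj
                obtain ⟨c0, hc0, hr0⟩ := rank_surj j (Finset.mem_range.1 hj)
                calc _ ≤ (Finset.univ.filter
                      (fun p : Fin k × Finset (Fin k) => ¬ (p.1 ∈ e c0 ↔ a c0 ∈ p.2))).card := by
                      apply Finset.card_le_card
                      exact Finset.monotone_filter_right _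
                        (fun p _ hp => flip_lemma j c0 hc0 hr0 p hp)
                  _ ≤ k * 2 ^ (k-1) := count_flip c0
            _ = m * (k * 2 ^ (k-1)) := by rw [Finset.sum_const, Finset.card_range, smul_eq_mul]
  -- pass to ℚ
  calc (((Xᶜ).image (fun i => X.filter (fun c => (rseqGraph a e).Adj i c))).card : ℚ)
      ≤ ((k * 2 ^ k + m * (k * 2 ^ (k-1)) : ℕ) : ℚ) := by exact_mod_cast main
    _ ≤ k * 2 ^ k * (1 + (m : ℚ) / 2) := by
        rcases k with _ | s
        · simp
        · push_cast
          have h2 : ((2:ℚ)) ^ (s+1) = 2 * 2 ^ s := by rw [pow_succ]; ring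
          apply le_of_eq
          rw [h2]
          ring
end

section
/- For every k ≥ 1, the proportion of k-rainbow threshold graphs on Fin (n+1) containing an isolated vertex is at least 1/(k! · (k·2^k)^{k + 2^k}) for all sufficiently large n, and likewise the proportion containing a dominating vertex (a vertex adjacent to all others) is at least 1/(k! · (k·2^k)^{k + 2^k}). Consequently, the limit as n → ∞ of the proportion of k-rainbow threshold graphs on Fin n satisfying the first-order sentence '(∃x)(∀y) ¬E(x,y)' is neither 0 nor 1 (if it exists); i.e., k-rainbow threshold graphs do not satisfy a first-order 0-1 law. -/
open scoped Classical in
/-- The set of k-rainbow threshold graphs on `Fin n`. -/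
noncomputable def RainGraph (k n : ℕ) : Finset (SimpleGraph (Fin n)) :=
  Finset.image (fun S : (Fin n → Fin k) × (Fin n → Finset (Fin k)) =>
    rseqGraph S.1 S.2) Finset.univ

lemma rseqGraph_adj {n k : ℕ} (a : Fin n → Fin k) (e : Fin n → Finset (Fin k)) (x y : Fin n) :
    (rseqGraph a e).Adj x y ↔ (x < y ∧ a x ∈ e y) ∨ (y < x ∧ a y ∈ e x) := Iff.rfl

section Constr

variable {k M : ℕ}

/-- the color sequence: first block is the identity enumeration of colors,
middle block is arbitrary `b`, rest is color 0. -/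
def aF (hk : 0 < k) (b : Fin M → Fin k) (v : Fin (2*k+M+1)) : Fin k :=
  if h : v.val < k then ⟨v.val, h⟩
  else if h2 : v.val < k + M then b ⟨v.val - k, by omega⟩
  else ⟨0, hk⟩

/-- the edge-set sequence: first block empty, middle arbitrary `f`,
detector block singletons, final vertex `E`. -/
def eF (f : Fin M → Finset (Fin k)) (E : Finset (Fin k)) (v : Fin (2*k+M+1)) :
    Finset (Fin k) :=
  if h1 : v.val < k then (∅ : Finset (Fin k))
  else if h2 : v.val < k + M then f ⟨v.val - k, by omega⟩
  else if h3 : v.val < 2*k + M then {(⟨v.val - (k + M), by omega⟩ : Fin k)}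
  else E

lemma aF_first (hk : 0 < k) (b : Fin M → Fin k) (c : Fin k) :
    aF hk b ⟨c.val, by have := c.isLt; omega⟩ = c := by
  have hc := c.isLt
  simp only [aF]
  rw [dif_pos hc]

lemma aF_mid (hk : 0 < k) (b : Fin M → Fin k) (j : Fin M) :
    aF hk b ⟨k + j.val, by have := j.isLt; omega⟩ = b j := by
  have hj := j.isLt
  simp only [aF]
  rw [dif_neg (by omega), dif_pos (by omega)]
  congr 1
  exact Fin.ext (by simp)

lemma eF_mid (f : Fin M → Finset (Fin k)) (E : Finset (Fin k)) (j : Fin M) :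
    eF f E ⟨k + j.val, by have := j.isLt; omega⟩ = f j := by
  have hj := j.isLt
  simp only [eF]
  rw [dif_neg (by omega), dif_pos (by omega)]
  congr 1
  exact Fin.ext (by simp)

lemma eF_det (f : Fin M → Finset (Fin k)) (E : Finset (Fin k)) (c : Fin k) :
    eF f E ⟨k + M + c.val, by have := c.isLt; omega⟩ = {c} := by
  have hc := c.isLt
  simp only [eF]
  rw [dif_neg (by omega), dif_neg (by omega), dif_pos (by omega)]
  congr 1
  exact Fin.ext (by simp)

lemma eF_last (f : Fin M → Finset (Fin k)) (E : Finset (Fin k)) :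
    eF f E ⟨2*k + M, by omega⟩ = E := by
  simp only [eF]
  rw [dif_neg (by omega), dif_neg (by omega), dif_neg (by omega)]

lemma adj_eF (hk : 0 < k) (b : Fin M → Fin k) (f : Fin M → Finset (Fin k))
    (E : Finset (Fin k)) (j : Fin M) (c : Fin k) :
    (rseqGraph (aF hk b) (eF f E)).Adj
      ⟨c.val, by have := c.isLt; omega⟩ ⟨k + j.val, by have := j.isLt; omega⟩ ↔ c ∈ f j := by
  have hc := c.isLt
  have hj := j.isLt
  rw [rseqGraph_adj, aF_first, eF_mid]
  constructor
  · rintro (⟨-, h⟩ | ⟨h, -⟩)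
    · exact h
    · exact absurd h (by rw [Fin.lt_def]; simp; omega)
  · intro h
    exact Or.inl ⟨by rw [Fin.lt_def]; simp; omega, h⟩

lemma adj_aF (hk : 0 < k) (b : Fin M → Fin k) (f : Fin M → Finset (Fin k))
    (E : Finset (Fin k)) (j : Fin M) (c : Fin k) :
    (rseqGraph (aF hk b) (eF f E)).Adj
      ⟨k + j.val, by have := j.isLt; omega⟩
      ⟨k + M + c.val, by have := c.isLt; omega⟩ ↔ b j = c := by
  have hc := c.isLt
  have hj := j.isLt
  rw [rseqGraph_adj, aF_mid, eF_det]
  constructor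
  · rintro (⟨-, h⟩ | ⟨h, -⟩)
    · exact Finset.mem_singleton.mp h
    · exact absurd h (by rw [Fin.lt_def]; simp; omega)
  · intro h
    exact Or.inl ⟨by rw [Fin.lt_def]; simp; omega, Finset.mem_singleton.mpr h⟩

lemma iso_last (hk : 0 < k) (b : Fin M → Fin k) (f : Fin M → Finset (Fin k)) :
    ∀ y, ¬ (rseqGraph (aF hk b) (eF f ∅)).Adj ⟨2*k + M, by omega⟩ y := by
  intro y
  rw [rseqGraph_adj]
  rintro (⟨h, -⟩ | ⟨-, h⟩)
  · rw [Fin.lt_def] at h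
    have := y.isLt
    simp at h
    omega
  · rw [eF_last] at h
    exact absurd h (Finset.notMem_empty _)

lemma dom_last (hk : 0 < k) (b : Fin M → Fin k) (f : Fin M → Finset (Fin k)) :
    ∀ y, y ≠ ⟨2*k + M, by omega⟩ →
      (rseqGraph (aF hk b) (eF f Finset.univ)).Adj ⟨2*k + M, by omega⟩ y := by
  intro y hy
  rw [rseqGraph_adj]
  refine Or.inr ⟨?_, by rw [eF_last]; exact Finset.mem_univ _⟩
  rw [Fin.lt_def]
  have h1 := y.isLt
  have h2 : y.val ≠ 2*k + M := fun h => hy (Fin.ext h)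
  simp
  omega

lemma constr_inj (hk : 0 < k) (E : Finset (Fin k)) :
    Function.Injective (fun S : (Fin M → Fin k) × (Fin M → Finset (Fin k)) =>
      rseqGraph (aF hk S.1) (eF S.2 E)) := by
  rintro ⟨b1, f1⟩ ⟨b2, f2⟩ h
  simp only at h
  have hb : b1 = b2 := by
    funext j
    have h2 := (adj_aF hk b2 f2 E j (b2 j)).mpr rfl
    rw [← h] at h2
    exact (adj_aF hk b1 f1 E j (b2 j)).mp h2
  have hf : f1 = f2 := by
    funext j
    ext c
    rw [← adj_eF hk b1 f1 E j c, ← adj_eF hk b2 f2 E j c, h]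
  simp [hb, hf]

end Constr

open scoped Classical in
set_option maxHeartbeats 1000000 in
theorem no_zero_one_law (k : ℕ) (hk : 1 ≤ k) :
    (∃ N : ℕ, ∀ n ≥ N,
      (((RainGraph k (n + 1)).filter
          (fun G => ∃ x, ∀ y, ¬ G.Adj x y)).card : ℝ) /
          ((RainGraph k (n + 1)).card : ℝ) ≥
        1 / ((Nat.factorial k : ℝ) * ((k : ℝ) * 2 ^ k) ^ (k + 2 ^ k)) ∧
      (((RainGraph k (n + 1)).filter
          (fun G => ∃ x, ∀ y, y ≠ x → G.Adj x y)).card : ℝ) /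
          ((RainGraph k (n + 1)).card : ℝ) ≥
        1 / ((Nat.factorial k : ℝ) * ((k : ℝ) * 2 ^ k) ^ (k + 2 ^ k))) ∧
    (∀ L : ℝ,
      Filter.Tendsto
        (fun n => (((RainGraph k n).filter
            (fun G => ∃ x, ∀ y, ¬ G.Adj x y)).card : ℝ) /
          ((RainGraph k n).card : ℝ)) Filter.atTop (nhds L) →
      L ≠ 0 ∧ L ≠ 1) := by
  have hk0 : 0 < k := hk
  set T : ℝ := (k : ℝ) * 2 ^ k with hTdef
  have hT1 : (1 : ℝ) ≤ T := by
    have h1 : (1 : ℝ) ≤ (k : ℝ) := by exact_mod_cast hk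
    have h2 : (1 : ℝ) ≤ (2 : ℝ) ^ k := one_le_pow₀ (by norm_num)
    calc (1:ℝ) = 1 * 1 := by ring
      _ ≤ (k : ℝ) * 2 ^ k := mul_le_mul h1 h2 (by norm_num) (by linarith)
  have hT0 : (0 : ℝ) < T := lt_of_lt_of_le one_pos hT1
  have hfac1 : (1 : ℝ) ≤ (Nat.factorial k : ℝ) := by
    exact_mod_cast Nat.one_le_iff_ne_zero.mpr (Nat.factorial_ne_zero k)
  have hC0 : (0 : ℝ) < (Nat.factorial k : ℝ) * T ^ (k + 2 ^ k) := by positivity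
  -- total count bounds
  have tot_pos : ∀ n : ℕ, 0 < ((RainGraph k n).card : ℝ) := by
    intro n
    have : (RainGraph k n).Nonempty :=
      ⟨rseqGraph (fun _ => ⟨0, hk0⟩) (fun _ => (∅ : Finset (Fin k))),
        Finset.mem_image.mpr ⟨⟨fun _ => ⟨0, hk0⟩, fun _ => ∅⟩, Finset.mem_univ _, rfl⟩⟩
    exact_mod_cast Finset.card_pos.mpr this
  have tot_le : ∀ n : ℕ, ((RainGraph k n).card : ℝ) ≤ T ^ n := by
    intro n
    have h1 : (RainGraph k n).card ≤ (k * 2 ^ k) ^ n := by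
      refine le_trans Finset.card_image_le ?_
      rw [Finset.card_univ]
      simp [Fintype.card_fun, Fintype.card_finset, mul_pow]
    calc ((RainGraph k n).card : ℝ) ≤ (((k * 2 ^ k) ^ n : ℕ) : ℝ) := by exact_mod_cast h1
      _ = T ^ n := by push_cast; rfl
  -- lower bound for filtered counts
  have main : ∀ (M : ℕ) (E : Finset (Fin k)) (P : SimpleGraph (Fin (2*k+M+1)) → Prop)
      (inst : DecidablePred P),
      (∀ (b : Fin M → Fin k) (f : Fin M → Finset (Fin k)),
        P (rseqGraph (aF hk0 b) (eF f E))) →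
      T ^ M ≤ ((@Finset.filter _ P inst (RainGraph k (2*k+M+1))).card : ℝ) := by
    intro M E P inst hP
    have hmaps : ∀ S : (Fin M → Fin k) × (Fin M → Finset (Fin k)),
        S ∈ (Finset.univ : Finset ((Fin M → Fin k) × (Fin M → Finset (Fin k)))) →
        rseqGraph (aF hk0 S.1) (eF S.2 E) ∈ @Finset.filter _ P inst (RainGraph k (2*k+M+1)) := by
      intro S _
      refine Finset.mem_filter.mpr ⟨?_, hP S.1 S.2⟩
      exact Finset.mem_image.mpr ⟨⟨aF hk0 S.1, eF S.2 E⟩, Finset.mem_univ _, rfl⟩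
    have hcard := Finset.card_le_card_of_injOn
      (fun S : (Fin M → Fin k) × (Fin M → Finset (Fin k)) =>
        rseqGraph (aF hk0 S.1) (eF S.2 E))
      hmaps ((constr_inj hk0 E).injOn)
    have hcu : (Finset.univ :
        Finset ((Fin M → Fin k) × (Fin M → Finset (Fin k)))).card = (k * 2 ^ k) ^ M := by
      rw [Finset.card_univ]
      simp [Fintype.card_fun, Fintype.card_finset, mul_pow]
    rw [hcu] at hcard
    calc T ^ M = (((k * 2 ^ k) ^ M : ℕ) : ℝ) := by push_cast; rfl
      _ ≤ _ := by exact_mod_cast hcard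
  -- the arithmetic comparison
  have ratio : ∀ (M : ℕ) (fc tc : ℝ), T ^ M ≤ fc → tc ≤ T ^ (2*k+M+1) → 0 < tc →
      fc / tc ≥ 1 / ((Nat.factorial k : ℝ) * T ^ (k + 2 ^ k)) := by
    intro M fc tc h1 h2 h3
    rw [ge_iff_le, div_le_div_iff₀ hC0 h3, one_mul]
    have hexp : 2*k+1 ≤ k + 2^k := by
      have := Nat.lt_two_pow_self (n := k)
      omega
    have e2 : T ^ (2*k+1) ≤ (Nat.factorial k : ℝ) * T ^ (k + 2 ^ k) := by
      calc T ^ (2*k+1) ≤ T ^ (k + 2^k) := pow_le_pow_right₀ hT1 hexp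
        _ = 1 * T ^ (k + 2^k) := (one_mul _).symm
        _ ≤ (Nat.factorial k : ℝ) * T ^ (k + 2 ^ k) :=
            mul_le_mul_of_nonneg_right hfac1 (by positivity)
    calc tc ≤ T ^ (2*k+M+1) := h2
      _ = T ^ M * T ^ (2*k+1) := by rw [← pow_add]; ring_nf
      _ ≤ fc * ((Nat.factorial k : ℝ) * T ^ (k + 2 ^ k)) :=
          mul_le_mul h1 e2 (by positivity) (le_trans (by positivity) h1)
  -- key bound
  have key : ∀ n : ℕ, 2*k ≤ n →
      ((((RainGraph k (n + 1)).filter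
          (fun G => ∃ x, ∀ y, ¬ G.Adj x y)).card : ℝ) /
          ((RainGraph k (n + 1)).card : ℝ) ≥
        1 / ((Nat.factorial k : ℝ) * T ^ (k + 2 ^ k)) ∧
      (((RainGraph k (n + 1)).filter
          (fun G => ∃ x, ∀ y, y ≠ x → G.Adj x y)).card : ℝ) /
          ((RainGraph k (n + 1)).card : ℝ) ≥
        1 / ((Nat.factorial k : ℝ) * T ^ (k + 2 ^ k))) := by
    intro n hn
    obtain ⟨M, rfl⟩ : ∃ M, n = 2*k + M := ⟨n - 2*k, by omega⟩
    constructor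
    · refine ratio M _ _ (main M ∅ (fun G => ∃ x, ∀ y, ¬ G.Adj x y) _ ?_) (tot_le _) (tot_pos _)
      intro b f
      exact ⟨⟨2*k + M, by omega⟩, iso_last hk0 b f⟩
    · refine ratio M _ _ (main M Finset.univ (fun G => ∃ x, ∀ y, y ≠ x → G.Adj x y) _ ?_) (tot_le _) (tot_pos _)
      intro b f
      exact ⟨⟨2*k + M, by omega⟩, fun y hy => dom_last hk0 b f y hy⟩
  refine ⟨⟨2*k, fun n hn => key n hn⟩, ?_⟩
  -- limit part
  intro L hL
  set c : ℝ := 1 / ((Nat.factorial k : ℝ) * T ^ (k + 2 ^ k)) with hcdef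
  have hc0 : 0 < c := by rw [hcdef]; positivity
  have hLc : c ≤ L := by
    refine ge_of_tendsto hL (Filter.eventually_atTop.mpr ⟨2*k+1, fun n hn => ?_⟩)
    obtain ⟨m, rfl⟩ : ∃ m, n = m + 1 := ⟨n - 1, by omega⟩
    exact (key m (by omega)).1
  have hL1 : L ≤ 1 - c := by
    refine le_of_tendsto hL (Filter.eventually_atTop.mpr ⟨2*k+1, fun n hn => ?_⟩)
    obtain ⟨m, rfl⟩ : ∃ m, n = m + 1 := ⟨n - 1, by omega⟩
    have hdom := (key m (by omega)).2
    -- disjointness of the two events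
    have hsum : ((RainGraph k (m+1)).filter (fun G => ∃ x, ∀ y, ¬ G.Adj x y)).card +
        ((RainGraph k (m+1)).filter (fun G => ∃ x, ∀ y, y ≠ x → G.Adj x y)).card ≤
        (RainGraph k (m+1)).card := by
      have hdisj : Disjoint
          ((RainGraph k (m+1)).filter (fun G => ∃ x, ∀ y, ¬ G.Adj x y))
          ((RainGraph k (m+1)).filter (fun G => ∃ x, ∀ y, y ≠ x → G.Adj x y)) := by
        rw [Finset.disjoint_left]
        intro G hG1 hG2
        obtain ⟨x, hx⟩ := (Finset.mem_filter.mp hG1).2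
        obtain ⟨z, hz⟩ := (Finset.mem_filter.mp hG2).2
        by_cases hxz : z = x
        · subst hxz
          have hcard2 : 1 < Fintype.card (Fin (m+1)) := by
            rw [Fintype.card_fin]; omega
          obtain ⟨y, hy⟩ := Fintype.exists_ne_of_one_lt_card hcard2 z
          exact hx y (hz y hy)
        · exact hx z ((hz x (fun h => hxz h.symm)).symm)
      calc _ = (((RainGraph k (m+1)).filter (fun G => ∃ x, ∀ y, ¬ G.Adj x y)) ∪
            ((RainGraph k (m+1)).filter (fun G => ∃ x, ∀ y, y ≠ x → G.Adj x y))).card :=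
          (Finset.card_union_of_disjoint hdisj).symm
        _ ≤ _ := Finset.card_le_card
            (Finset.union_subset (Finset.filter_subset _ _) (Finset.filter_subset _ _))
    have htp := tot_pos (m+1)
    have hsumR : (((RainGraph k (m+1)).filter (fun G => ∃ x, ∀ y, ¬ G.Adj x y)).card : ℝ) /
        ((RainGraph k (m+1)).card : ℝ) +
        (((RainGraph k (m+1)).filter (fun G => ∃ x, ∀ y, y ≠ x → G.Adj x y)).card : ℝ) /
        ((RainGraph k (m+1)).card : ℝ) ≤ 1 := by
      rw [← add_div, div_le_one htp]
      exact_mod_cast hsum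
    have := ge_iff_le.mp hdom
    linarith
  exact ⟨fun h => by rw [h] at hLc; linarith, fun h => by rw [h] at hL1; linarith⟩
end

section
/- Every threshold bigraph is a 2-rainbow threshold graph. Precisely: let H = X ∪ Y be a bipartite graph with parts X, Y, a linear order ≤ on H, and a function α : H → {0,1}, such that there are no edges within X or within Y, and for z₀ < z₁ in H lying in different parts, (z₀, z₁) is an edge iff α(z₁) = 1. Define the 2-rainbow sequence (a, e) by: a(z) = 0 iff z ∈ X; a(z) ∉ e(z); and (1 − a(z)) ∈ e(z) iff α(z) = 1. Then the rainbow threshold graph of (a, e) with respect to ≤ equals H. -/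
theorem threshold_bigraph_is_two_rainbow {H : Type*} [LinearOrder H]
    (X Y : Set H) (hcover : X ∪ Y = Set.univ) (hdisj : X ∩ Y = ∅)
    (G : SimpleGraph H) (α : H → Fin 2)
    (hX : ∀ z₀ z₁, z₀ ∈ X → z₁ ∈ X → ¬ G.Adj z₀ z₁)
    (hY : ∀ z₀ z₁, z₀ ∈ Y → z₁ ∈ Y → ¬ G.Adj z₀ z₁)
    (hcross : ∀ z₀ z₁, z₀ < z₁ → (z₀ ∈ X ↔ z₁ ∈ Y) →
      (G.Adj z₀ z₁ ↔ α z₁ = 1))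
    (a : H → Fin 2) (e : H → Set (Fin 2))
    (ha : ∀ z, a z = 0 ↔ z ∈ X)
    (hae : ∀ z, a z ∉ e z)
    (he : ∀ z, (1 - a z) ∈ e z ↔ α z = 1) :
    rainGraph a e = G := by
  have hY' : ∀ z, z ∈ Y ↔ z ∉ X := by
    intro z
    constructor
    · intro hz hx
      have : z ∈ X ∩ Y := ⟨hx, hz⟩
      simp [hdisj] at this
    · intro hz
      have h2 : z ∈ X ∪ Y := by rw [hcover]; trivial
      rcases h2 with h2 | h2
      · exact absurd h2 hz
      · exact h2
  -- key membership characterization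
  have hmem : ∀ z₀ z₁ : H, a z₀ ∈ e z₁ ↔ (a z₀ ≠ a z₁ ∧ α z₁ = 1) := by
    intro z₀ z₁
    constructor
    · intro hm
      have hne : a z₀ ≠ a z₁ := by
        intro h; exact hae z₁ (h ▸ hm)
      have : a z₀ = 1 - a z₁ := by omega
      exact ⟨hne, (he z₁).1 (this ▸ hm)⟩
    · rintro ⟨hne, hα⟩
      have : a z₀ = 1 - a z₁ := by omega
      rw [this]; exact (he z₁).2 hα
  -- different colors iff different parts
  have hpart : ∀ z₀ z₁ : H, a z₀ ≠ a z₁ ↔ (z₀ ∈ X ↔ z₁ ∈ Y) := by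
    intro z₀ z₁
    rw [hY' z₁]
    constructor
    · intro hne
      constructor
      · intro hx hx'
        exact hne (((ha z₀).2 hx).trans ((ha z₁).2 hx').symm)
      · intro hx'
        by_contra hx
        have h0 : a z₀ ≠ 0 := fun h => hx ((ha z₀).1 h)
        have h1 : a z₁ ≠ 0 := fun h => hx' ((ha z₁).1 h)
        omega
    · intro hiff h
      by_cases hx : z₀ ∈ X
      · exact hiff.1 hx ((ha z₁).1 (h.symm.trans ((ha z₀).2 hx)))
      · have h1 : z₁ ∈ X := not_not.1 fun hz => hx (hiff.2 hz)
        exact hx ((ha z₀).1 (h.trans ((ha z₁).2 h1)))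
  -- same part implies no G edge
  have hsame : ∀ z₀ z₁ : H, ¬(z₀ ∈ X ↔ z₁ ∈ Y) → ¬ G.Adj z₀ z₁ := by
    intro z₀ z₁ h
    by_cases hx : z₀ ∈ X
    · have hny : z₁ ∉ Y := fun hy => h ⟨fun _ => hy, fun _ => hx⟩
      have h1 : z₁ ∈ X := not_not.1 fun hz => hny ((hY' z₁).2 hz)
      exact hX z₀ z₁ hx h1
    · have hy₀ : z₀ ∈ Y := (hY' z₀).2 hx
      have hy₁ : z₁ ∈ Y := by
        by_contra hy
        exact h ⟨fun hx' => absurd hx' hx, fun hy' => absurd hy' hy⟩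
      exact hY z₀ z₁ hy₀ hy₁
  ext z₀ z₁
  show (z₀ < z₁ ∧ a z₀ ∈ e z₁) ∨ (z₁ < z₀ ∧ a z₁ ∈ e z₀) ↔ G.Adj z₀ z₁
  rcases lt_trichotomy z₀ z₁ with hlt | heq | hgt
  · simp only [hlt, true_and, (lt_asymm hlt : ¬ z₁ < z₀), false_and, or_false]
    rw [hmem, hpart]
    by_cases hp : (z₀ ∈ X ↔ z₁ ∈ Y)
    · rw [hcross z₀ z₁ hlt hp]; tauto
    · have := hsame z₀ z₁ hp; tauto
  · subst heq
    simp [G.loopless]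
  · simp only [hgt, true_and, (lt_asymm hgt : ¬ z₀ < z₁), false_and, false_or]
    rw [hmem, hpart]
    rw [G.adj_comm]
    by_cases hp : (z₁ ∈ X ↔ z₀ ∈ Y)
    · rw [hcross z₁ z₀ hgt hp]; tauto
    · have := hsame z₁ z₀ hp; tauto
end

section
/- Suppose n and ℓ satisfy ⌊n/ℓ⌋ ≥ (k+1)·2^{k+1}·(k+1+2^{k+1}). Then no ℓ-good (k+1)-rainbow threshold graph on Fin n is isomorphic to a k-rainbow threshold graph on Fin n. -/
def ellGood {n : ℕ} (k ℓ : ℕ) (a : Fin n → Fin k) (e : Fin n → Finset (Fin k)) : Prop :=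
  ∀ r ≤ n / ℓ - 3, ∀ s : Fin k × Finset (Fin k),
    ∃ c : Fin n, (r + 1) * ℓ ≤ c.val ∧ c.val < (r + 2) * ℓ ∧ (a c, e c) = s

section Counting

lemma card_not_mem_filter {α : Type*} [Fintype α] [DecidableEq α] (t : α) :
    (Finset.univ.filter fun E : Finset α => t ∉ E).card = 2 ^ (Fintype.card α - 1) := by
  have : (Finset.univ.filter fun E : Finset α => t ∉ E) = (Finset.univ.erase t).powerset := by
    ext E
    simp [Finset.subset_erase]
  rw [this, Finset.card_powerset, Finset.card_erase_of_mem (Finset.mem_univ t), Finset.card_univ]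

lemma card_mem_filter {α : Type*} [Fintype α] [DecidableEq α] (t : α) (h : 0 < Fintype.card α) :
    (Finset.univ.filter fun E : Finset α => t ∈ E).card = 2 ^ (Fintype.card α - 1) := by
  have h2 := Finset.card_filter_add_card_filter_not (s := (Finset.univ : Finset (Finset α)))
    (p := fun E => t ∈ E)
  rw [card_not_mem_filter t] at h2
  have h1 : (Finset.univ : Finset (Finset α)).card = 2 ^ Fintype.card α := by
    simp [Finset.card_univ]
  have h3 : 2 ^ Fintype.card α = 2 ^ (Fintype.card α - 1) * 2 := by
    rw [← pow_succ]; congr 1; omega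
  omega

lemma card_xor_pairs {k : ℕ} (hk : 0 < k) (t : Fin k) (S : Finset (Fin k)) :
    (Finset.univ.filter fun p : Fin k × Finset (Fin k) =>
      ¬((t ∈ p.2) ↔ (p.1 ∈ S))).card = k * 2 ^ (k - 1) := by
  rw [Finset.card_filter]
  rw [← Finset.univ_product_univ, Finset.sum_product]
  have key : ∀ c : Fin k, (∑ E : Finset (Fin k), if ¬((t ∈ E) ↔ (c ∈ S)) then 1 else 0)
      = 2 ^ (k - 1) := by
    intro c
    by_cases hc : c ∈ S
    · have : (∑ E : Finset (Fin k), if ¬((t ∈ E) ↔ (c ∈ S)) then 1 else 0)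
          = (Finset.univ.filter fun E : Finset (Fin k) => t ∉ E).card := by
        rw [Finset.card_filter]
        exact Finset.sum_congr rfl fun E _ => by simp [hc]
      rw [this, card_not_mem_filter]
      simp
    · have : (∑ E : Finset (Fin k), if ¬((t ∈ E) ↔ (c ∈ S)) then 1 else 0)
          = (Finset.univ.filter fun E : Finset (Fin k) => t ∈ E).card := by
        rw [Finset.card_filter]
        exact Finset.sum_congr rfl fun E _ => by simp [hc]
      rw [this, card_mem_filter t (by simpa using hk)]
      simp
  rw [Finset.sum_congr rfl fun c _ => key c]
  simp [Finset.card_univ, mul_comm]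

lemma card_zero_mem_pairs {j : ℕ} (hj : 0 < j) (z : Fin j) :
    (Finset.univ.filter fun p : Fin j × Finset (Fin j) => z ∈ p.2).card = j * 2 ^ (j - 1) := by
  rw [Finset.card_filter, ← Finset.univ_product_univ, Finset.sum_product]
  have key : ∀ c : Fin j, (∑ E : Finset (Fin j), if z ∈ E then 1 else 0) = 2 ^ (j - 1) := by
    intro c
    rw [← Finset.card_filter, card_mem_filter z (by simpa using hj)]
    simp
  rw [Finset.sum_congr rfl fun c _ => key c]
  simp [Finset.card_univ, mul_comm]

end Counting

section Rank

variable {n : ℕ}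

/-- rank of `v` in `s`. -/
def rnk (s : Finset (Fin n)) (v : Fin n) : ℕ := (s.filter (· < v)).card

lemma rnk_le (s : Finset (Fin n)) (v : Fin n) : rnk s v ≤ s.card :=
  Finset.card_le_card (Finset.filter_subset _ _)

lemma rnk_lt_iff {s : Finset (Fin n)} {u v : Fin n} (hu : u ∉ s) (hv : v ∈ s) :
    rnk s v < rnk s u ↔ v < u := by
  constructor
  · intro hlt
    by_contra hnot
    push_neg at hnot
    rcases lt_or_eq_of_le hnot with h1 | h1
    · have : s.filter (· < u) ⊆ s.filter (· < v) := by
        intro w hw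
        rcases Finset.mem_filter.1 hw with ⟨h2, h3⟩
        exact Finset.mem_filter.2 ⟨h2, lt_trans h3 h1⟩
      have := Finset.card_le_card this
      unfold rnk at hlt
      omega
    · subst h1; exact hu hv
  · intro hlt
    have hsub : insert v (s.filter (· < v)) ⊆ s.filter (· < u) := by
      intro w hw
      rcases Finset.mem_insert.1 hw with rfl | hw
      · exact Finset.mem_filter.2 ⟨hv, hlt⟩
      · rcases Finset.mem_filter.1 hw with ⟨h1, h2⟩
        exact Finset.mem_filter.2 ⟨h1, lt_trans h2 hlt⟩
    have hcard := Finset.card_le_card hsub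
    rw [Finset.card_insert_of_notMem (by simp)] at hcard
    unfold rnk
    omega

lemma rnk_orderIso {s : Finset (Fin n)} {m : ℕ} (hm : s.card = m) (t : Fin m) :
    rnk s (s.orderIsoOfFin hm t : Fin n) = t.val := by
  set z := s.orderIsoOfFin hm with hz
  have himg : s.filter (· < (z t : Fin n)) = (Finset.Iio t).image (fun s' => (z s' : Fin n)) := by
    ext v
    simp only [Finset.mem_filter, Finset.mem_image, Finset.mem_Iio]
    constructor
    · rintro ⟨hvs, hvlt⟩
      refine ⟨z.symm ⟨v, hvs⟩, ?_, by simp⟩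
      have : z (z.symm ⟨v, hvs⟩) < z t := by
        rw [z.apply_symm_apply]; exact hvlt
      exact z.lt_iff_lt.1 this
    · rintro ⟨s', hs', rfl⟩
      exact ⟨(z s').2, by exact_mod_cast z.lt_iff_lt.2 hs'⟩
  unfold rnk
  rw [himg, Finset.card_image_of_injective _ (fun x y hxy => z.injective (Subtype.ext hxy)),
    Fin.card_Iio]

lemma image_card_le_changes {α : Type*} [DecidableEq α] (f : ℕ → α) (m : ℕ) :
    ((Finset.Icc 0 m).image f).card
      ≤ 1 + ((Finset.Icc 1 m).filter fun i => f i ≠ f (i - 1)).card := by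
  have hsub : (Finset.Icc 0 m).image f ⊆
      insert (f 0) (((Finset.Icc 1 m).filter fun i => f i ≠ f (i - 1)).image f) := by
    intro x hx
    rcases Finset.mem_image.1 hx with ⟨i, hi, rfl⟩
    rcases Finset.mem_Icc.1 hi with ⟨-, him⟩
    clear hx hi
    induction i with
    | zero => exact Finset.mem_insert_self _ _
    | succ i ih =>
      by_cases hf : f (i + 1) = f i
      · rw [hf]; exact ih (by omega)
      · have hmem : (i + 1) ∈ (Finset.Icc 1 m).filter (fun i => f i ≠ f (i - 1)) := by
          simp only [Finset.mem_filter, Finset.mem_Icc]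
          exact ⟨⟨by omega, him⟩, by simpa using hf⟩
        exact Finset.mem_insert_of_mem (Finset.mem_image_of_mem f hmem)
  refine (Finset.card_le_card hsub).trans ?_
  refine (Finset.card_insert_le _ _).trans ?_
  have := Finset.card_image_le (s := (Finset.Icc 1 m).filter fun i => f i ≠ f (i - 1)) (f := f)
  omega

end Rank

section Upper

variable {n k : ℕ}

lemma rain_upper (hk : 0 < k) (a' : Fin n → Fin k) (e' : Fin n → Finset (Fin k))
    (X : Finset (Fin n)) :
    ((Finset.univ \ X).image fun u => X.filter (fun v => (rseqGraph a' e').Adj u v)).card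
      ≤ k * 2 ^ k + X.card * (k * 2 ^ (k - 1)) := by
  rcases Finset.eq_empty_or_nonempty X with rfl | hX
  · -- X empty : all neighborhoods are empty
    have hsub : ((Finset.univ \ (∅ : Finset (Fin n))).image
        fun u => (∅ : Finset (Fin n)).filter (fun v => (rseqGraph a' e').Adj u v))
        ⊆ {∅} := by
      intro x hx
      rcases Finset.mem_image.1 hx with ⟨u, -, rfl⟩
      simp
    refine (Finset.card_le_card hsub).trans ?_
    have h1 : 1 ≤ k * 2 ^ k := Nat.one_le_iff_ne_zero.2 (by positivity)
    have h2 : ({(∅ : Finset (Fin n))} : Finset (Finset (Fin n))).card = 1 := rfl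
    rw [h2]
    exact h1.trans (Nat.le_add_right _ _)
  set m := X.card with hm
  have hm0 : 0 < m := Finset.card_pos.2 hX
  set z := X.orderIsoOfFin hm.symm with hzdef
  -- the vertex of rank i - 1
  set w : ℕ → Fin n := fun i => (z ⟨(i - 1) % m, Nat.mod_lt _ hm0⟩ : Fin n) with hw
  -- canonical neighborhood shape
  set Φ : Fin k × Finset (Fin k) → ℕ → Finset (Fin n) :=
    fun p i => X.filter (fun v => if rnk X v < i then a' v ∈ p.2 else p.1 ∈ e' v) with hΦ
  -- Step 1 : every neighborhood is some Φ p i with i ≤ m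
  have step1 : ((Finset.univ \ X).image fun u => X.filter (fun v => (rseqGraph a' e').Adj u v))
      ⊆ (Finset.univ ×ˢ Finset.Icc 0 m).image (fun q : (Fin k × Finset (Fin k)) × ℕ =>
          Φ q.1 q.2) := by
    intro N hN
    rcases Finset.mem_image.1 hN with ⟨u, hu, rfl⟩
    have huX : u ∉ X := (Finset.mem_sdiff.1 hu).2
    refine Finset.mem_image.2 ⟨⟨(a' u, e' u), rnk X u⟩, ?_, ?_⟩
    · exact Finset.mem_product.2 ⟨Finset.mem_univ _, Finset.mem_Icc.2 ⟨Nat.zero_le _, rnk_le X u⟩⟩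
    · symm
      apply Finset.filter_congr
      intro v hv
      have hlt : rnk X v < rnk X u ↔ v < u := rnk_lt_iff huX hv
      by_cases hcase : v < u
      · rw [if_pos (hlt.2 hcase)]
        constructor
        · rintro (⟨h1, -⟩ | ⟨-, h2⟩)
          · exact absurd (lt_trans h1 hcase) (lt_irrefl _)
          · exact h2
        · intro hmem; exact Or.inr ⟨hcase, hmem⟩
      · have huv : u < v := by
          rcases lt_trichotomy u v with h1 | h1 | h1
          · exact h1
          · exact absurd (h1 ▸ hv) huX
          · exact absurd h1 hcase
        rw [if_neg (fun hc => hcase (hlt.1 hc))]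
        constructor
        · rintro (⟨-, h1⟩ | ⟨h2, -⟩)
          · exact h1
          · exact absurd (lt_trans h2 huv) (lt_irrefl _)
        · intro hmem; exact Or.inl ⟨huv, hmem⟩
  refine (Finset.card_le_card step1).trans ?_
  -- Step 2 : split the image over pairs
  have step2 : ((Finset.univ ×ˢ Finset.Icc 0 m).image (fun q : (Fin k × Finset (Fin k)) × ℕ =>
      Φ q.1 q.2)).card ≤ ∑ p : Fin k × Finset (Fin k), ((Finset.Icc 0 m).image (Φ p)).card := by
    have hsub : (Finset.univ ×ˢ Finset.Icc 0 m).image (fun q : (Fin k × Finset (Fin k)) × ℕ =>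
        Φ q.1 q.2) ⊆ Finset.univ.biUnion (fun p => (Finset.Icc 0 m).image (Φ p)) := by
      intro N hN
      rcases Finset.mem_image.1 hN with ⟨⟨p, i⟩, hq, rfl⟩
      rcases Finset.mem_product.1 hq with ⟨-, hi⟩
      exact Finset.mem_biUnion.2 ⟨p, Finset.mem_univ _, Finset.mem_image_of_mem _ hi⟩
    exact (Finset.card_le_card hsub).trans (Finset.card_biUnion_le)
  refine step2.trans ?_
  -- Step 3 + 4 : each pair contributes at most 1 + its xor count
  have step34 : ∀ p : Fin k × Finset (Fin k), ((Finset.Icc 0 m).image (Φ p)).card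
      ≤ 1 + ((Finset.Icc 1 m).filter fun i =>
          ¬((a' (w i) ∈ p.2) ↔ (p.1 ∈ e' (w i)))).card := by
    intro p
    refine (image_card_le_changes (Φ p) m).trans ?_
    have hmono : ((Finset.Icc 1 m).filter fun i => Φ p i ≠ Φ p (i - 1)) ⊆
        ((Finset.Icc 1 m).filter fun i => ¬((a' (w i) ∈ p.2) ↔ (p.1 ∈ e' (w i)))) := by
      intro i hi
      rcases Finset.mem_filter.1 hi with ⟨hiIcc, hichg⟩
      rcases Finset.mem_Icc.1 hiIcc with ⟨hi1, him⟩
      refine Finset.mem_filter.2 ⟨hiIcc, ?_⟩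
      intro hiff
      apply hichg
      apply Finset.filter_congr
      intro v hv
      -- compare ranks with i - 1
      rcases Nat.lt_trichotomy (rnk X v) (i - 1) with hr | hr | hr
      · rw [if_pos (by omega), if_pos (by omega)]
      · -- v is the vertex w i
        have hveq : v = w i := by
          have h1 : z (z.symm ⟨v, hv⟩) = ⟨v, hv⟩ := z.apply_symm_apply _
          have h2 : rnk X v = (z.symm ⟨v, hv⟩ : Fin m).val := by
            conv_lhs => rw [show v = (z (z.symm ⟨v, hv⟩) : Fin n) by rw [h1]]
            exact rnk_orderIso hm.symm _
          have h3 : (z.symm ⟨v, hv⟩ : Fin m) = ⟨(i - 1) % m, Nat.mod_lt _ hm0⟩ := by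
            apply Fin.ext
            have : (i - 1) % m = i - 1 := Nat.mod_eq_of_lt (by omega)
            simp only [this]
            omega
          rw [hw]
          simp only [← h3, h1]
        rw [if_pos (by omega), if_neg (by omega), hveq]
        exact hiff
      · rw [if_neg (by omega), if_neg (by omega)]
    have := Finset.card_le_card hmono
    omega
  refine (Finset.sum_le_sum fun p _ => step34 p).trans ?_
  rw [Finset.sum_add_distrib]
  have hconst : (∑ _p : Fin k × Finset (Fin k), 1) = k * 2 ^ k := by
    simp [Fintype.card_finset]
  have hswap : (∑ p : Fin k × Finset (Fin k),
      ((Finset.Icc 1 m).filter fun i => ¬((a' (w i) ∈ p.2) ↔ (p.1 ∈ e' (w i)))).card)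
      = ∑ i ∈ Finset.Icc 1 m, (Finset.univ.filter fun p : Fin k × Finset (Fin k) =>
          ¬((a' (w i) ∈ p.2) ↔ (p.1 ∈ e' (w i)))).card := by
    simp only [Finset.card_filter]
    exact Finset.sum_comm
  rw [hconst, hswap]
  have hinner : ∀ i ∈ Finset.Icc 1 m, (Finset.univ.filter fun p : Fin k × Finset (Fin k) =>
      ¬((a' (w i) ∈ p.2) ↔ (p.1 ∈ e' (w i)))).card = k * 2 ^ (k - 1) :=
    fun i _ => card_xor_pairs hk _ _
  rw [Finset.sum_congr rfl hinner, Finset.sum_const, Nat.card_Icc, smul_eq_mul]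
  simp

end Upper

lemma nbhd_card_iso {n : ℕ} {G G' : SimpleGraph (Fin n)} [DecidableRel G.Adj]
    [DecidableRel G'.Adj] (φ : G ≃g G') (X : Finset (Fin n)) :
    ((Finset.univ \ X).image fun v => X.filter (fun w => G.Adj v w)).card
      = ((Finset.univ \ X.image ⇑φ).image fun v =>
          (X.image ⇑φ).filter (fun w => G'.Adj v w)).card := by
  have hinj : Function.Injective (⇑φ) := φ.toEquiv.injective
  have hpt : ∀ v : Fin n, (X.filter (fun w => G.Adj v w)).image ⇑φ
      = (X.image ⇑φ).filter (fun w => G'.Adj (φ v) w) := by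
    intro v
    ext w
    simp only [Finset.mem_image, Finset.mem_filter]
    constructor
    · rintro ⟨y, ⟨hyX, hadj⟩, rfl⟩
      exact ⟨⟨y, hyX, rfl⟩, (φ.map_adj_iff).2 hadj⟩
    · rintro ⟨⟨y, hyX, rfl⟩, hadj⟩
      exact ⟨y, ⟨hyX, (φ.map_adj_iff).1 hadj⟩, rfl⟩
  have himg : (((Finset.univ \ X).image fun v => X.filter (fun w => G.Adj v w)).image
      (Finset.image ⇑φ))
      = ((Finset.univ \ X.image ⇑φ).image fun v => (X.image ⇑φ).filter (fun w => G'.Adj v w)) := by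
    rw [Finset.image_image]
    have h1 : ((Finset.univ \ X).image
        ((Finset.image ⇑φ) ∘ fun v => X.filter (fun w => G.Adj v w)))
        = (Finset.univ \ X).image fun v => (X.image ⇑φ).filter (fun w => G'.Adj (φ v) w) :=
      Finset.image_congr fun v _ => hpt v
    rw [h1]
    have h2 : (Finset.univ \ X).image (fun v => (X.image ⇑φ).filter (fun w => G'.Adj (φ v) w))
        = ((Finset.univ \ X).image ⇑φ).image
            (fun v => (X.image ⇑φ).filter (fun w => G'.Adj v w)) := by
      rw [Finset.image_image]
      rfl
    rw [h2]
    congr 1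
    rw [Finset.image_sdiff _ _ hinj]
    congr 1
    exact Finset.image_univ_equiv φ.toEquiv
  rw [← himg, Finset.card_image_of_injective _ (Finset.image_injective hinj)]

open Fin.NatCast in
lemma rain_lower {n ℓ j : ℕ} (hj : 0 < j)
    (a : Fin n → Fin j) (e : Fin n → Finset (Fin j)) (hgood : ellGood j ℓ a e)
    (hQ : 16 * j + 3 ≤ n / ℓ) :
    ∃ X : Finset (Fin n), X.card = 8 * j ∧
      j * 2 ^ (j - 1) * (6 * j + 1) ≤
        ((Finset.univ \ X).image fun v =>
          X.filter (fun w => (rseqGraph a e).Adj v w)).card := by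
  have hℓ : 0 < ℓ := by
    rcases Nat.eq_zero_or_pos ℓ with rfl | hp
    · rw [Nat.div_zero] at hQ; omega
    · exact hp
  have hn : 0 < n := by
    rcases Nat.eq_zero_or_pos n with rfl | hp
    · rw [Nat.zero_div] at hQ; omega
    · exact hp
  haveI : NeZero j := ⟨hj.ne'⟩
  set m := 8 * j with hmdef
  set p : ℕ → Fin j × Finset (Fin j) := fun d =>
    if d ≤ j then ((↑(d - 1) : Fin j), ∅)
    else if d ≤ 7 * j then (0, ∅)
    else (0, {(↑(d - 7 * j - 1) : Fin j)}) with hpdef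
  have hgood' : ∀ r, r ≤ 16 * j → ∀ s : Fin j × Finset (Fin j),
      ∃ c : Fin n, (r + 1) * ℓ ≤ c.val ∧ c.val < (r + 2) * ℓ ∧ a c = s.1 ∧ e c = s.2 := by
    intro r hr s
    obtain ⟨c, h1, h2, h3⟩ := hgood r (by omega) s
    exact ⟨c, h1, h2, (Prod.ext_iff.1 h3).1, (Prod.ext_iff.1 h3).2⟩
  choose f hf1 hf2 hf3 hf4 using hgood'
  set x : ℕ → Fin n := fun d =>
    if hd : 1 ≤ d ∧ d ≤ m then f (2 * d - 1) (by omega) (p d) else ⟨0, hn⟩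
    with hxdef
  have hx : ∀ d, 1 ≤ d → d ≤ m → (2 * d) * ℓ ≤ (x d).val ∧ (x d).val < (2 * d + 1) * ℓ
      ∧ a (x d) = (p d).1 ∧ e (x d) = (p d).2 := by
    intro d h1 h2
    have hd : 1 ≤ d ∧ d ≤ m := ⟨h1, h2⟩
    have hxd : x d = f (2 * d - 1) (by omega) (p d) := by
      rw [hxdef]; exact dif_pos hd
    rw [hxd]
    have e1 : 2 * d - 1 + 1 = 2 * d := by omega
    have e2 : 2 * d - 1 + 2 = 2 * d + 1 := by omega
    refine ⟨?_, ?_, hf3 _ _ _, hf4 _ _ _⟩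
    · have h' := hf1 (2 * d - 1) (by omega) (p d); simpa [e1] using h'
    · have h' := hf2 (2 * d - 1) (by omega) (p d); simpa [e2] using h'
  set u : (Fin j × Finset (Fin j)) → ℕ → Fin n := fun s i =>
    if hi : j ≤ i ∧ i ≤ 7 * j then f (2 * i) (by omega) s else ⟨0, hn⟩
    with hudef
  have hu : ∀ s i, j ≤ i → i ≤ 7 * j → (2 * i + 1) * ℓ ≤ (u s i).val
      ∧ (u s i).val < (2 * i + 2) * ℓ ∧ a (u s i) = s.1 ∧ e (u s i) = s.2 := by
    intro s i h1 h2
    have hi : j ≤ i ∧ i ≤ 7 * j := ⟨h1, h2⟩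
    have hud : u s i = f (2 * i) (by omega) s := by
      rw [hudef]; exact dif_pos hi
    rw [hud]
    exact ⟨hf1 _ _ _, hf2 _ _ _, hf3 _ _ _, hf4 _ _ _⟩
  set X : Finset (Fin n) := (Finset.Icc 1 m).image x with hXdef
  have hxmono : ∀ d d', 1 ≤ d → d ≤ m → 1 ≤ d' → d' ≤ m → d < d' → x d < x d' := by
    intro d d' h1 h2 h1' h2' hlt
    obtain ⟨ha1, ha2, -, -⟩ := hx d h1 h2
    obtain ⟨hb1, hb2, -, -⟩ := hx d' h1' h2'
    rw [Fin.lt_def]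
    have : (2 * d + 1) * ℓ ≤ (2 * d') * ℓ := Nat.mul_le_mul_right _ (by omega)
    omega
  have hXcard : X.card = m := by
    rw [hXdef, Finset.card_image_of_injOn, Nat.card_Icc]
    · omega
    · intro d hd d' hd' hEq
      simp only [Finset.coe_Icc, Set.mem_Icc] at hd hd'
      by_contra hne
      rcases Nat.lt_or_ge d d' with hc | hc
      · exact absurd hEq (ne_of_lt (hxmono d d' hd.1 hd.2 hd'.1 hd'.2 hc))
      · have hc2 : d' < d := by omega
        exact absurd hEq.symm (ne_of_lt (hxmono d' d hd'.1 hd'.2 hd.1 hd.2 hc2))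
  have hmemX : ∀ d, 1 ≤ d → d ≤ m → x d ∈ X := fun d h1 h2 =>
    Finset.mem_image_of_mem x (Finset.mem_Icc.2 ⟨h1, h2⟩)
  have huX : ∀ s i, j ≤ i → i ≤ 7 * j → u s i ∉ X := by
    intro s i hi1 hi2 hmem
    rcases Finset.mem_image.1 hmem with ⟨d, hd, hEq⟩
    rcases Finset.mem_Icc.1 hd with ⟨h1, h2⟩
    obtain ⟨hx1, hx2, -, -⟩ := hx d h1 h2
    obtain ⟨hu1, hu2, -, -⟩ := hu s i hi1 hi2
    rw [hEq] at hx1 hx2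
    have c1 : 2 * d * ℓ < (2 * i + 2) * ℓ := lt_of_le_of_lt hx1 hu2
    have c2 : (2 * i + 1) * ℓ < (2 * d + 1) * ℓ := lt_of_le_of_lt hu1 hx2
    have d1 := Nat.lt_of_mul_lt_mul_right c1
    have d2 := Nat.lt_of_mul_lt_mul_right c2
    omega
  have hpos : ∀ s i d, j ≤ i → i ≤ 7 * j → 1 ≤ d → d ≤ m →
      (d ≤ i → x d < u s i) ∧ (i < d → u s i < x d) := by
    intro s i d hi1 hi2 hd1 hd2
    obtain ⟨hx1, hx2, -, -⟩ := hx d hd1 hd2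
    obtain ⟨hu1, hu2, -, -⟩ := hu s i hi1 hi2
    constructor
    · intro hdi
      rw [Fin.lt_def]
      have : (2 * d + 1) * ℓ ≤ (2 * i + 1) * ℓ := Nat.mul_le_mul_right _ (by omega)
      omega
    · intro hdi
      rw [Fin.lt_def]
      have : (2 * i + 2) * ℓ ≤ (2 * d) * ℓ := Nat.mul_le_mul_right _ (by omega)
      omega
  have hmem : ∀ s i d, j ≤ i → i ≤ 7 * j → 1 ≤ d → d ≤ m →
      (x d ∈ X.filter (fun w => (rseqGraph a e).Adj (u s i) w) ↔
        (if d ≤ i then (p d).1 ∈ s.2 else s.1 ∈ (p d).2)) := by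
    intro s i d hi1 hi2 hd1 hd2
    obtain ⟨-, -, hxa, hxe⟩ := hx d hd1 hd2
    obtain ⟨-, -, hua, hue⟩ := hu s i hi1 hi2
    rw [Finset.mem_filter]
    obtain ⟨hlt1, hlt2⟩ := hpos s i d hi1 hi2 hd1 hd2
    by_cases hdi : d ≤ i
    · rw [if_pos hdi]
      have h1 : x d < u s i := hlt1 hdi
      constructor
      · rintro ⟨-, (⟨h2, -⟩ | ⟨-, h3⟩)⟩
        · exact absurd (lt_trans h2 h1) (lt_irrefl _)
        · rw [hxa, hue] at h3; exact h3
      · intro h3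
        exact ⟨hmemX d hd1 hd2, Or.inr ⟨h1, by rw [hxa, hue]; exact h3⟩⟩
    · rw [if_neg hdi]
      have h1 : u s i < x d := hlt2 (by omega)
      constructor
      · rintro ⟨-, (⟨-, h2⟩ | ⟨h3, -⟩)⟩
        · rw [hua, hxe] at h2; exact h2
        · exact absurd (lt_trans h3 h1) (lt_irrefl _)
      · intro h3
        exact ⟨hmemX d hd1 hd2, Or.inl ⟨h1, by rw [hua, hxe]; exact h3⟩⟩
  set T := (Finset.univ.filter fun s : Fin j × Finset (Fin j) => (0 : Fin j) ∈ s.2)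
      ×ˢ Finset.Icc j (7 * j) with hTdef
  have hTcard : T.card = j * 2 ^ (j - 1) * (6 * j + 1) := by
    rw [hTdef, Finset.card_product, card_zero_mem_pairs hj, Nat.card_Icc]
    congr 1
    omega
  refine ⟨X, hXcard, ?_⟩
  rw [← hTcard]
  apply Finset.card_le_card_of_injOn
    (f := fun q : (Fin j × Finset (Fin j)) × ℕ =>
      X.filter (fun w => (rseqGraph a e).Adj (u q.1 q.2) w))
  · rintro ⟨s, i⟩ hq
    rcases Finset.mem_product.1 hq with ⟨-, hi⟩
    rcases Finset.mem_Icc.1 hi with ⟨hi1, hi2⟩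
    exact Finset.mem_image.2 ⟨u s i,
      Finset.mem_sdiff.2 ⟨Finset.mem_univ _, huX s i hi1 hi2⟩, rfl⟩
  · rintro ⟨s, i⟩ hq ⟨s', i'⟩ hq' hEq
    simp only [Finset.mem_coe, hTdef, Finset.mem_product, Finset.mem_filter,
      Finset.mem_Icc] at hq hq'
    obtain ⟨⟨-, hs0⟩, hi1, hi2⟩ := hq
    obtain ⟨⟨-, hs0'⟩, hi1', hi2'⟩ := hq'
    simp only at hEq
    have hii : i = i' := by
      by_contra hne
      have key : ∀ (i₁ i₂ : ℕ) (s₁ s₂ : Fin j × Finset (Fin j)), j ≤ i₁ → i₁ < i₂ → i₂ ≤ 7 * j →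
          (0 : Fin j) ∈ s₂.2 →
          X.filter (fun w => (rseqGraph a e).Adj (u s₁ i₁) w) ≠
            X.filter (fun w => (rseqGraph a e).Adj (u s₂ i₂) w) := by
        intro i₁ i₂ s₁ s₂ h1 h2 h3 h02 hF
        have hm1 := hmem s₁ i₁ (i₁ + 1) h1 (by omega) (by omega) (by omega)
        have hm2 := hmem s₂ i₂ (i₁ + 1) (by omega) h3 (by omega) (by omega)
        rw [hF] at hm1
        have hp : p (i₁ + 1) = (0, ∅) := by
          simp only [hpdef]
          rw [if_neg (by omega), if_pos (by omega)]
        rw [if_neg (by omega), hp] at hm1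
        rw [if_pos (by omega), hp] at hm2
        exact Finset.notMem_empty _ (hm1.1 (hm2.2 h02))
      rcases Nat.lt_or_ge i i' with hc | hc
      · exact key i i' s s' hi1 hc hi2' hs0' hEq
      · exact key i' i s' s hi1' (by omega) hi2 hs0 hEq.symm
    subst hii
    have hceq : s.1 = s'.1 := by
      have hd1 : 1 ≤ 7 * j + 1 + s.1.val := by omega
      have hd2 : 7 * j + 1 + s.1.val ≤ m := by have := s.1.isLt; omega
      have hm1 := hmem s i (7 * j + 1 + s.1.val) hi1 hi2 hd1 hd2
      have hm2 := hmem s' i (7 * j + 1 + s.1.val) hi1' hi2' hd1 hd2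
      rw [hEq] at hm1
      have hp : p (7 * j + 1 + s.1.val) = (0, {s.1}) := by
        simp only [hpdef]
        rw [if_neg (by omega), if_neg (by omega)]
        have : 7 * j + 1 + s.1.val - 7 * j - 1 = s.1.val := by omega
        rw [this, Fin.cast_val_eq_self]
      rw [if_neg (by omega), hp] at hm1
      rw [if_neg (by omega), hp] at hm2
      have hmm : s'.1 ∈ ({s.1} : Finset (Fin j)) := hm2.1 (hm1.2 (Finset.mem_singleton_self _))
      exact (Finset.mem_singleton.1 hmm).symm
    have hEeq : s.2 = s'.2 := by
      ext t
      have hd1 : 1 ≤ t.val + 1 := by omega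
      have hd2 : t.val + 1 ≤ m := by have := t.isLt; omega
      have hm1 := hmem s i (t.val + 1) hi1 hi2 hd1 hd2
      have hm2 := hmem s' i (t.val + 1) hi1' hi2' hd1 hd2
      rw [hEq] at hm1
      have hp : p (t.val + 1) = (t, ∅) := by
        simp only [hpdef]
        rw [if_pos (by have := t.isLt; omega)]
        have : t.val + 1 - 1 = t.val := by omega
        rw [this, Fin.cast_val_eq_self]
      have hti : t.val + 1 ≤ i := by have := t.isLt; omega
      rw [if_pos hti, hp] at hm1
      rw [if_pos hti, hp] at hm2
      exact (hm1.symm.trans hm2)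
    have : s = s' := Prod.ext_iff.2 ⟨hceq, hEeq⟩
    rw [this]


theorem good_succ_rainbow_not_isomorphic_to_rainbow (k n ℓ : ℕ)
    (h : (k + 1) * 2 ^ (k + 1) * (k + 1 + 2 ^ (k + 1)) ≤ n / ℓ)
    (a : Fin n → Fin (k + 1)) (e : Fin n → Finset (Fin (k + 1)))
    (hgood : ellGood (k + 1) ℓ a e)
    (a' : Fin n → Fin k) (e' : Fin n → Finset (Fin k)) :
    ¬ Nonempty (rseqGraph a e ≃g rseqGraph a' e') := by
  rintro ⟨φ⟩
  have hpos : 0 < n / ℓ := lt_of_lt_of_le (by positivity) h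
  have hn : 0 < n := by
    rcases Nat.eq_zero_or_pos n with rfl | hp
    · rw [Nat.zero_div] at hpos; omega
    · exact hp
  rcases Nat.eq_zero_or_pos k with rfl | hk
  · exact (a' ⟨0, hn⟩).elim0
  have h4 : (4 : ℕ) ≤ 2 ^ (k + 1) := by
    calc (4 : ℕ) = 2 ^ 2 := by norm_num
    _ ≤ 2 ^ (k + 1) := Nat.pow_le_pow_right (by norm_num) (by omega)
  have hQ : 16 * (k + 1) + 3 ≤ n / ℓ := by
    refine le_trans ?_ h
    have hstep : (k + 1) * 4 * (k + 1 + 4) ≤ (k + 1) * 2 ^ (k + 1) * (k + 1 + 2 ^ (k + 1)) := by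
      gcongr
    nlinarith [hstep, hk]
  obtain ⟨X, hXcard, hlow⟩ := rain_lower (by omega : 0 < k + 1) a e hgood hQ
  have htrans := nbhd_card_iso φ X
  have hupper := rain_upper hk a' e' (X.image ⇑φ)
  have hinj : Function.Injective (⇑φ) := φ.toEquiv.injective
  have hXcard' : (X.image ⇑φ).card = 8 * (k + 1) := by
    rw [Finset.card_image_of_injective _ hinj, hXcard]
  rw [htrans] at hlow
  rw [hXcard'] at hupper
  have hcomb := hlow.trans hupper
  have e1 : k + 1 - 1 = k := by omega
  rw [e1] at hcomb
  have h2 : (2 : ℕ) ^ k = 2 * 2 ^ (k - 1) := by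
    rw [← pow_succ']
    congr 1
    omega
  have hP : 1 ≤ (2 : ℕ) ^ (k - 1) := Nat.one_le_two_pow
  rw [h2] at hcomb
  nlinarith [hcomb, hP]
end

section
/- For every k ≥ 1, asymptotically almost surely a uniformly random (k+1)-rainbow threshold graph on Fin n is not isomorphic to any k-rainbow threshold graph on Fin n; that is, the ratio |{G ∈ RainGraph_{k+1}(n) : ∃ H ∈ RainGraph_k(n), G ≅ H}| / |RainGraph_{k+1}(n)| tends to 0 as n → ∞. -/
lemma rseq_adj {n k : ℕ} (a : Fin n → Fin k) (e : Fin n → Finset (Fin k)) (u v : Fin n) :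
    (rseqGraph a e).Adj u v ↔ (u < v ∧ a u ∈ e v) ∨ (v < u ∧ a v ∈ e u) := Iff.rfl

/-- An induced matching with `t` edges. -/
def IndMatch {n : ℕ} (G : SimpleGraph (Fin n)) (t : ℕ) : Prop :=
  ∃ x y : Fin t → Fin n,
    (∀ i i', G.Adj (x i) (y i') ↔ i = i') ∧
    (∀ i i', ¬ G.Adj (x i) (x i')) ∧
    (∀ i i', ¬ G.Adj (y i) (y i'))

lemma indmatch_iso {n : ℕ} {G H : SimpleGraph (Fin n)} (φ : G ≃g H) {t : ℕ}
    (h : IndMatch G t) : IndMatch H t := by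
  obtain ⟨x, y, h1, h2, h3⟩ := h
  refine ⟨fun i => φ (x i), fun i => φ (y i), ?_, ?_, ?_⟩
  · intro i i'; rw [φ.map_adj_iff]; exact h1 i i'
  · intro i i'; rw [φ.map_adj_iff]; exact h2 i i'
  · intro i i'; rw [φ.map_adj_iff]; exact h3 i i'

lemma no_indmatch {n k : ℕ} (a : Fin n → Fin k) (E : Fin n → Finset (Fin k)) :
    ¬ IndMatch (rseqGraph a E) (k + 1) := by
  rintro ⟨x, y, hxy, hxx, hyy⟩
  have hadj : ∀ i, (rseqGraph a E).Adj (x i) (y i) := fun i => (hxy i i).mpr rfl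
  have hcross : ∀ i i' : Fin (k+1), i ≠ i' →
      ∀ u v : Fin n, (u = x i ∨ u = y i) → (v = x i' ∨ v = y i') →
      ¬ (rseqGraph a E).Adj u v ∧ u ≠ v := by
    intro i i' hne u v hu hv
    constructor
    · rcases hu with rfl | rfl <;> rcases hv with rfl | rfl
      · exact hxx i i'
      · exact fun h => hne ((hxy i i').mp h)
      · exact fun h => hne (((hxy i' i).mp h.symm).symm)
      · exact hyy i i'
    · rcases hu with rfl | rfl <;> rcases hv with rfl | rfl
      · intro h
        have h2 := hadj i
        rw [h] at h2
        exact hne ((hxy i' i).mp h2).symm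
      · intro h
        have h2 := hadj i'
        rw [← h] at h2
        exact hxx i' i h2
      · intro h
        have h2 := hadj i
        rw [h] at h2
        exact hxx i i' h2
      · intro h
        have h2 := hadj i
        rw [h] at h2
        exact hne ((hxy i i').mp h2)
  have hex : ∀ i : Fin (k+1), ∃ p : Fin n × Fin n,
      p.1 < p.2 ∧ a p.1 ∈ E p.2 ∧ (p.1 = x i ∨ p.1 = y i) ∧ (p.2 = x i ∨ p.2 = y i) := by
    intro i
    rcases (rseq_adj a E _ _).mp (hadj i) with ⟨h1, h2⟩ | ⟨h1, h2⟩
    · exact ⟨(x i, y i), h1, h2, Or.inl rfl, Or.inr rfl⟩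
    · exact ⟨(y i, x i), h1, h2, Or.inr rfl, Or.inl rfl⟩
  choose p h1 h2 h3 h4 using hex
  have hcard : Fintype.card (Fin k) < Fintype.card (Fin (k+1)) := by simp
  obtain ⟨i, i', hne, heq⟩ := Fintype.exists_ne_map_eq_of_card_lt (fun i => a (p i).1) hcard
  have key : ∀ s t : Fin (k+1), s ≠ t → a (p s).1 = a (p t).1 → (p t).2 < (p s).1 := by
    intro s t hst ha
    have hcr := hcross s t hst (p s).1 (p t).2 (h3 s) (h4 t)
    rcases lt_trichotomy (p s).1 (p t).2 with hlt | heq2 | hgt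
    · exact absurd ((rseq_adj a E _ _).mpr (Or.inl ⟨hlt, ha ▸ h2 t⟩)) hcr.1
    · exact absurd heq2 hcr.2
    · exact hgt
  exact lt_irrefl _ (lt_trans (lt_trans (lt_trans (h1 i) (key i' i hne.symm heq.symm)) (h1 i'))
    (key i i' hne heq))

lemma win_lt {n m b o : ℕ} (hb : (b+1) * m ≤ n) (ho : o < m) : b*m + o < n :=
  lt_of_lt_of_le (Nat.add_lt_add_left ho _)
    (le_trans (le_of_eq (Nat.succ_mul b m).symm) hb)

def pat (k : ℕ) (o : Fin (2*(k+1))) : Fin (k+1) × Finset (Fin (k+1)) :=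
  (⟨(o : ℕ)/2, by have := o.isLt; omega⟩,
   if (o : ℕ) % 2 = 1 then {⟨(o : ℕ)/2, by have := o.isLt; omega⟩} else ∅)

lemma window_indmatch {n k : ℕ} (a : Fin n → Fin (k+1)) (E : Fin n → Finset (Fin (k+1)))
    (b : ℕ) (hb : (b+1) * (2*(k+1)) ≤ n)
    (hw : ∀ o : Fin (2*(k+1)),
      (a ⟨b*(2*(k+1)) + (o : ℕ), win_lt hb o.isLt⟩,
       E ⟨b*(2*(k+1)) + (o : ℕ), win_lt hb o.isLt⟩) = pat k o) :
    IndMatch (rseqGraph a E) (k+1) := by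
  have hval : ∀ (o : ℕ) (ho : o < 2*(k+1)) (pf : b*(2*(k+1)) + o < n),
      (a ⟨b*(2*(k+1)) + o, pf⟩, E ⟨b*(2*(k+1)) + o, pf⟩) = pat k ⟨o, ho⟩ :=
    fun o ho pf => hw ⟨o, ho⟩
  have hxlt : ∀ i : Fin (k+1), b*(2*(k+1)) + 2*(i:ℕ) < n :=
    fun i => win_lt hb (by have := i.isLt; omega)
  have hylt : ∀ i : Fin (k+1), b*(2*(k+1)) + (2*(i:ℕ)+1) < n :=
    fun i => win_lt hb (by have := i.isLt; omega)
  have haX : ∀ i : Fin (k+1), a ⟨b*(2*(k+1)) + 2*(i:ℕ), hxlt i⟩ = i := by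
    intro i
    have h := congrArg Prod.fst (hval (2*(i:ℕ)) (by have := i.isLt; omega) (hxlt i))
    simp only [pat] at h
    rw [h]
    apply Fin.ext
    simp
  have hEX : ∀ i : Fin (k+1), E ⟨b*(2*(k+1)) + 2*(i:ℕ), hxlt i⟩ = ∅ := by
    intro i
    have h := congrArg Prod.snd (hval (2*(i:ℕ)) (by have := i.isLt; omega) (hxlt i))
    simp only [pat] at h
    rw [h, if_neg]
    omega
  have haY : ∀ i : Fin (k+1), a ⟨b*(2*(k+1)) + (2*(i:ℕ)+1), hylt i⟩ = i := by
    intro i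
    have h := congrArg Prod.fst (hval (2*(i:ℕ)+1) (by have := i.isLt; omega) (hylt i))
    simp only [pat] at h
    rw [h]
    apply Fin.ext
    simp
    omega
  have hEY : ∀ i : Fin (k+1), E ⟨b*(2*(k+1)) + (2*(i:ℕ)+1), hylt i⟩ = ({i} : Finset _) := by
    intro i
    have h := congrArg Prod.snd (hval (2*(i:ℕ)+1) (by have := i.isLt; omega) (hylt i))
    simp only [pat] at h
    rw [h, if_pos]
    · congr 1
      apply Fin.ext
      simp
      omega
    · omega
  refine ⟨fun i => ⟨b*(2*(k+1)) + 2*(i:ℕ), hxlt i⟩,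
          fun i => ⟨b*(2*(k+1)) + (2*(i:ℕ)+1), hylt i⟩, ?_, ?_, ?_⟩
  · intro i i'
    rw [rseq_adj, haX, hEY, haY, hEX]
    simp only [Finset.mem_singleton, Finset.notMem_empty, and_false, or_false,
      Fin.mk_lt_mk, Fin.ext_iff]
    constructor
    · rintro ⟨-, h⟩; exact h
    · intro h; exact ⟨by omega, h⟩
  · intro i i'
    rw [rseq_adj, hEX, hEX]
    simp
  · intro i i'
    rw [rseq_adj, haY, haY, hEY, hEY]
    simp only [Finset.mem_singleton, Fin.mk_lt_mk, Fin.ext_iff]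
    rintro (⟨h1, h2⟩ | ⟨h1, h2⟩) <;> omega

lemma block_le {b n m : ℕ} (hb : b < n / m) : (b+1) * m ≤ n :=
  le_trans (Nat.mul_le_mul_right m hb) (Nat.div_mul_le_self n m)

open scoped Classical in
lemma card_bad_le (k n : ℕ) :
    (Finset.univ.filter (fun S : (Fin n → Fin (k+1)) × (Fin n → Finset (Fin (k+1))) =>
        ¬ IndMatch (rseqGraph S.1 S.2) (k+1))).card ≤
      (Fintype.card (Fin (k+1) × Finset (Fin (k+1))) ^ (2*(k+1)) - 1) ^ (n / (2*(k+1))) *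
        Fintype.card (Fin (k+1) × Finset (Fin (k+1))) ^ (n - 2*(k+1) * (n / (2*(k+1)))) := by
  set m := 2*(k+1) with hm
  have hm0 : 0 < m := by omega
  -- the target type
  set Sg := Fin (k+1) × Finset (Fin (k+1)) with hSg
  have hrm : m * (n / m) ≤ n := by
    have := Nat.div_add_mod n m; omega
  let f : {S : (Fin n → Fin (k+1)) × (Fin n → Finset (Fin (k+1))) //
      ¬ IndMatch (rseqGraph S.1 S.2) (k+1)} →
      (Fin (n / m) → {w : Fin m → Sg // w ≠ pat k}) × (Fin (n - m * (n / m)) → Sg) :=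
    fun S =>
      (fun b => ⟨fun o => (S.1.1 ⟨(b:ℕ)*m + (o:ℕ), win_lt (block_le b.isLt) o.isLt⟩,
                  S.1.2 ⟨(b:ℕ)*m + (o:ℕ), win_lt (block_le b.isLt) o.isLt⟩), by
          intro hweq
          exact S.2 (window_indmatch S.1.1 S.1.2 (b:ℕ) (block_le b.isLt)
            (fun o => congrFun hweq o))⟩,
       fun r => (S.1.1 ⟨m * (n / m) + (r:ℕ), by have := r.isLt; omega⟩,
                 S.1.2 ⟨m * (n / m) + (r:ℕ), by have := r.isLt; omega⟩))
  have _ := hrm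
  have finj : Function.Injective f := by
    intro S T h
    have h1 := congrArg Prod.fst h
    have h2 := congrArg Prod.snd h
    apply Subtype.ext
    have hseq : ∀ i : Fin n, (S.1.1 i, S.1.2 i) = (T.1.1 i, T.1.2 i) := by
      intro i
      by_cases hi : (i:ℕ) < m * (n / m)
      · have hb : (i:ℕ)/m < n/m := by
          have hd : m ∣ m * (n / m) := Dvd.intro _ rfl
          have := Nat.div_lt_div_of_lt_of_dvd hd hi
          rwa [Nat.mul_div_cancel_left _ hm0] at this
        have ho : (i:ℕ) % m < m := Nat.mod_lt _ hm0
        have hpos : ((i:ℕ)/m)*m + (i:ℕ)%m = (i:ℕ) := Nat.div_add_mod' _ _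
        have h3 := congrFun (Subtype.ext_iff.mp (congrFun h1 ⟨(i:ℕ)/m, hb⟩)) ⟨(i:ℕ)%m, ho⟩
        simp only [f] at h3
        have hfin : (⟨((i:ℕ)/m)*m + (i:ℕ)%m, win_lt (block_le hb) ho⟩ : Fin n) = i :=
          Fin.ext hpos
        rwa [hfin] at h3
      · have hin := i.isLt
        have hr : (i:ℕ) - m*(n/m) < n - m*(n/m) := by omega
        have h3 := congrFun h2 ⟨(i:ℕ) - m*(n/m), hr⟩
        simp only [f] at h3
        have hfin : (⟨m*(n/m) + ((i:ℕ) - m*(n/m)), by omega⟩ : Fin n) = i :=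
          Fin.ext (Nat.add_sub_cancel' (le_of_not_gt hi))
        rwa [hfin] at h3
    have e1 : S.1.1 = T.1.1 := funext fun i => congrArg Prod.fst (hseq i)
    have e2 : S.1.2 = T.1.2 := funext fun i => congrArg Prod.snd (hseq i)
    exact Prod.ext_iff.mpr ⟨e1, e2⟩
  have hcard := Fintype.card_le_of_injective f finj
  rw [Fintype.card_subtype] at hcard
  refine le_trans hcard ?_
  have hne : Fintype.card {w : Fin m → Sg // w ≠ pat k} =
      Fintype.card Sg ^ m - 1 := by
    have hc := Fintype.card_subtype_compl (fun w : Fin m → Sg => w = pat k)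
    have h1 : Fintype.card {w : Fin m → Sg // w = pat k} = 1 := Fintype.card_subtype_eq _
    have h2 : Fintype.card (Fin m → Sg) = Fintype.card Sg ^ m := by
      rw [Fintype.card_fun, Fintype.card_fin]
    rw [h1, h2] at hc
    exact hc
  rw [Fintype.card_prod, Fintype.card_fun, Fintype.card_fun, hne, Fintype.card_fin,
    Fintype.card_fin]

section Probe

variable (j L : ℕ) {B' n : ℕ}

def probeSeq (hj : 0 < j) (hjL : j < L)
    (g : Fin B' × Fin (L - j) → Fin j × Finset (Fin j)) (i : Fin n) :
    Fin j × Finset (Fin j) :=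
  if h : (i:ℕ) % L < j then (⟨(i:ℕ) % L, h⟩, {⟨(i:ℕ) % L, h⟩})
  else if hb : (i:ℕ)/L < B' then
    g (⟨(i:ℕ)/L, hb⟩, ⟨(i:ℕ) % L - j, by
      have := Nat.mod_lt (i:ℕ) (show 0 < L by omega); omega⟩)
  else (⟨0, hj⟩, ∅)

lemma probeSeq_probe (hj : 0 < j) (hjL : j < L)
    (g : Fin B' × Fin (L - j) → Fin j × Finset (Fin j))
    (c b' : ℕ) (hc : c < j) (pf : c + b'*L < n) :
    probeSeq j L hj hjL g ⟨c + b'*L, pf⟩ = (⟨c, hc⟩, {⟨c, hc⟩}) := by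
  have hmod : (c + b'*L) % L = c := by
    rw [Nat.add_mul_mod_self_right, Nat.mod_eq_of_lt (by omega)]
  simp only [probeSeq, hmod]
  rw [dif_pos hc]

lemma probeSeq_free (hj : 0 < j) (hjL : j < L)
    (g : Fin B' × Fin (L - j) → Fin j × Finset (Fin j))
    (b : Fin B') (s : Fin (L - j)) (pf : (j + (s:ℕ)) + (b:ℕ)*L < n) :
    probeSeq j L hj hjL g ⟨(j + (s:ℕ)) + (b:ℕ)*L, pf⟩ = g (b, s) := by
  have hs := s.isLt
  have hmod : ((j + (s:ℕ)) + (b:ℕ)*L) % L = j + (s:ℕ) := by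
    rw [Nat.add_mul_mod_self_right, Nat.mod_eq_of_lt (by omega)]
  have hdiv : ((j + (s:ℕ)) + (b:ℕ)*L) / L = (b:ℕ) := by
    rw [Nat.add_mul_div_right _ _ (show 0 < L by omega),
      Nat.div_eq_of_lt (by omega), Nat.zero_add]
  simp only [probeSeq, hmod, hdiv]
  rw [dif_neg (by omega), dif_pos b.isLt]
  congr 1
  refine Prod.ext_iff.mpr ⟨Fin.ext rfl, Fin.ext ?_⟩
  simp only
  omega

end Probe

open scoped Classical in
lemma card_rain_ge (k L n : ℕ) (hL : k + 1 < L) :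
    Fintype.card (Fin (k+1) × Finset (Fin (k+1))) ^ ((n / L - 2) * (L - (k+1)))
      ≤ (RainGraph (k+1) n).card := by
  have hj : 0 < k + 1 := by omega
  set j := k + 1 with hjdef
  set B' := n / L - 2 with hB'
  let Φ : (Fin B' × Fin (L - j) → Fin j × Finset (Fin j)) → SimpleGraph (Fin n) :=
    fun g => rseqGraph (fun i => (probeSeq j L hj hL g i).1)
      (fun i => (probeSeq j L hj hL g i).2)
  have hinj : Function.Injective Φ := by
    intro g g' hgg
    funext p
    obtain ⟨b, s⟩ := p
    have hbB : (b:ℕ) < n / L - 2 := hB' ▸ b.isLt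
    have hb3 : ((b:ℕ)+3) * L ≤ n := by
      have h1 : (b:ℕ)+3 ≤ n / L := by omega
      calc ((b:ℕ)+3) * L ≤ (n/L) * L := Nat.mul_le_mul_right L h1
        _ ≤ n := Nat.div_mul_le_self n L
    have hexp : ((b:ℕ)+3)*L = (b:ℕ)*L + 3*L := by ring
    have hexp1 : ((b:ℕ)+1)*L = (b:ℕ)*L + L := by ring
    have hs := s.isLt
    have hfree : (j + (s:ℕ)) + (b:ℕ)*L < n := by omega
    have hAdj : ∀ u v, (Φ g).Adj u v ↔ (Φ g').Adj u v := by
      rw [hgg]; exact fun _ _ => Iff.rfl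
    have hE : (g (b,s)).2 = (g' (b,s)).2 := by
      ext c
      have hcc := c.isLt
      have hplt : (c:ℕ) + (b:ℕ)*L < n := by omega
      have hlt2 : ((c:ℕ) + (b:ℕ)*L) < (j + (s:ℕ)) + (b:ℕ)*L := by omega
      have key : ∀ gg, ((Φ gg).Adj ⟨(c:ℕ) + (b:ℕ)*L, hplt⟩ ⟨(j + (s:ℕ)) + (b:ℕ)*L, hfree⟩
          ↔ c ∈ (gg (b,s)).2) := by
        intro gg
        simp only [Φ, rseq_adj, probeSeq_probe j L hj hL gg (c:ℕ) (b:ℕ) hcc hplt,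
          probeSeq_free j L hj hL gg b s hfree, Fin.mk_lt_mk, Fin.eta,
          Finset.mem_singleton]
        constructor
        · rintro (⟨-, h⟩ | ⟨h1, -⟩)
          · exact h
          · omega
        · intro h; exact Or.inl ⟨hlt2, h⟩
      exact (key g).symm.trans ((hAdj _ _).trans (key g'))
    have ha : (g (b,s)).1 = (g' (b,s)).1 := by
      have key2 : ∀ gg (c : Fin j) (hp : (c:ℕ) + ((b:ℕ)+1)*L < n),
          ((Φ gg).Adj ⟨(j + (s:ℕ)) + (b:ℕ)*L, hfree⟩ ⟨(c:ℕ) + ((b:ℕ)+1)*L, hp⟩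
            ↔ (gg (b,s)).1 = c) := by
        intro gg c hp
        have hcc := c.isLt
        have hgt : (j + (s:ℕ)) + (b:ℕ)*L < (c:ℕ) + ((b:ℕ)+1)*L := by omega
        simp only [Φ, rseq_adj, probeSeq_probe j L hj hL gg (c:ℕ) ((b:ℕ)+1) c.isLt hp,
          probeSeq_free j L hj hL gg b s hfree, Fin.mk_lt_mk, Fin.eta,
          Finset.mem_singleton]
        constructor
        · rintro (⟨-, h⟩ | ⟨h1, -⟩)
          · exact h
          · omega
        · intro h; exact Or.inl ⟨hgt, h⟩
      have hp : ((g (b,s)).1 : ℕ) + ((b:ℕ)+1)*L < n := by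
        have := (g (b,s)).1.isLt; omega
      have h1 : (Φ g).Adj _ _ := (key2 g (g (b,s)).1 hp).mpr rfl
      exact ((key2 g' (g (b,s)).1 hp).mp ((hAdj _ _).mp h1)).symm
    exact Prod.ext_iff.mpr ⟨ha, hE⟩
  have hsub : Finset.image Φ Finset.univ ⊆ RainGraph j n := by
    intro G hG
    rw [Finset.mem_image] at hG
    obtain ⟨g, -, rfl⟩ := hG
    exact Finset.mem_image.mpr ⟨(fun i => (probeSeq j L hj hL g i).1,
      fun i => (probeSeq j L hj hL g i).2), Finset.mem_univ _, rfl⟩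
  calc Fintype.card (Fin j × Finset (Fin j)) ^ (B' * (L - j))
      = Fintype.card (Fin B' × Fin (L - j) → Fin j × Finset (Fin j)) := by
        simp [Fintype.card_fun]
    _ = (Finset.image Φ Finset.univ).card := by
        rw [Finset.card_image_of_injective _ hinj, Finset.card_univ]
    _ ≤ (RainGraph j n).card := Finset.card_le_card hsub

open scoped Classical in
lemma numer_le (k n : ℕ) :
    ((RainGraph (k + 1) n).filter
        (fun G => ∃ H ∈ RainGraph k n, Nonempty (G ≃g H))).card ≤
      (Fintype.card (Fin (k+1) × Finset (Fin (k+1))) ^ (2*(k+1)) - 1) ^ (n / (2*(k+1))) *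
        Fintype.card (Fin (k+1) × Finset (Fin (k+1))) ^ (n - 2*(k+1) * (n / (2*(k+1)))) := by
  refine le_trans ?_ (card_bad_le k n)
  have himp : ∀ G : SimpleGraph (Fin n),
      (∃ H ∈ RainGraph k n, Nonempty (G ≃g H)) → ¬ IndMatch G (k+1) := by
    rintro G ⟨H, hH, ⟨φ⟩⟩ hIM
    rw [RainGraph, Finset.mem_image] at hH
    obtain ⟨S, -, rfl⟩ := hH
    exact no_indmatch S.1 S.2 (indmatch_iso φ hIM)
  have hsub : (RainGraph (k + 1) n).filter
      (fun G => ∃ H ∈ RainGraph k n, Nonempty (G ≃g H)) ⊆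
      Finset.image (fun S : (Fin n → Fin (k+1)) × (Fin n → Finset (Fin (k+1))) =>
          rseqGraph S.1 S.2)
        (Finset.univ.filter (fun S => ¬ IndMatch (rseqGraph S.1 S.2) (k+1))) := by
    intro G hG
    rw [Finset.mem_filter] at hG
    obtain ⟨hG1, hG2⟩ := hG
    rw [RainGraph, Finset.mem_image] at hG1
    obtain ⟨S, -, rfl⟩ := hG1
    exact Finset.mem_image.mpr ⟨S, Finset.mem_filter.mpr ⟨Finset.mem_univ _, himp _ hG2⟩, rfl⟩
  exact le_trans (Finset.card_le_card hsub) Finset.card_image_le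

set_option maxHeartbeats 1000000 in
open scoped Classical in
theorem aas_not_isomorphic_to_lower_rainbow (k : ℕ) (hk : 1 ≤ k) :
    Filter.Tendsto
      (fun n =>
        (((RainGraph (k + 1) n).filter
            (fun G => ∃ H ∈ RainGraph k n, Nonempty (G ≃g H))).card : ℝ) /
          ((RainGraph (k + 1) n).card : ℝ))
      Filter.atTop (nhds 0) := by
  set m : ℕ := 2*(k+1) with hm
  set M : ℕ := Fintype.card (Fin (k+1) × Finset (Fin (k+1))) with hM
  have hm0 : 0 < m := by omega
  have hM2 : 2 ≤ M := by
    have h1 : M = (k+1) * 2^(k+1) := by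
      rw [hM, Fintype.card_prod, Fintype.card_fin, Fintype.card_finset, Fintype.card_fin]
    have h2 : 2 ≤ 2^(k+1) := by
      calc 2 = 2^1 := by norm_num
        _ ≤ 2^(k+1) := Nat.pow_le_pow_right (by norm_num) (by omega)
    calc 2 ≤ 1 * 2^(k+1) := by omega
      _ ≤ (k+1) * 2^(k+1) := Nat.mul_le_mul_right _ (by omega)
      _ = M := h1.symm
  set P : ℕ := M^m - 1 with hP
  have hMm : 2 ≤ M^m := le_trans hM2 (Nat.le_self_pow (by omega) M)
  have hP1 : 1 ≤ P := by omega
  have hPM : P < M^m := by omega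
  have hRM1 : (1:ℝ) < (M:ℝ) := by exact_mod_cast hM2
  have hRM0 : (0:ℝ) < (M:ℝ) := by linarith
  have hRP1 : (1:ℝ) ≤ (P:ℝ) := by exact_mod_cast hP1
  have hRP0 : (0:ℝ) < (P:ℝ) := by linarith
  have hRPM : (P:ℝ) < (M:ℝ)^m := by exact_mod_cast hPM
  have hε : 0 < (m:ℝ) * Real.log M - Real.log P := by
    have h1 : Real.log P < Real.log ((M:ℝ)^m) := Real.log_lt_log hRP0 hRPM
    rw [Real.log_pow] at h1
    linarith
  obtain ⟨L0, hL0⟩ := exists_nat_gt ((m:ℝ) * (k+1) * Real.log M /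
    ((m:ℝ) * Real.log M - Real.log P))
  set L : ℕ := L0 + (k+2) with hLdef
  have hLk : k + 1 < L := by omega
  have hL0' : 0 < L := by omega
  have hRL0 : (0:ℝ) < (L:ℝ) := by exact_mod_cast hL0'
  have hRm0 : (0:ℝ) < (m:ℝ) := by exact_mod_cast hm0
  have hLε : (m:ℝ) * (k+1) * Real.log M < (L:ℝ) * ((m:ℝ) * Real.log M - Real.log P) := by
    have h2 : (L0:ℝ) ≤ (L:ℝ) := by exact_mod_cast (by omega : L0 ≤ L)
    rw [div_lt_iff₀ hε] at hL0
    have h3 := mul_le_mul_of_nonneg_right h2 (le_of_lt hε)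
    linarith
  set δ : ℝ := ((L - (k+1) : ℕ) : ℝ) with hδ
  have hδval : δ = (L:ℝ) - (k+1) := by
    rw [hδ, Nat.cast_sub (le_of_lt hLk)]
    push_cast
    ring
  have hδ0 : 0 ≤ δ := by rw [hδ]; positivity
  set ρ : ℝ := (P:ℝ) ^ ((1:ℝ)/m) * (M:ℝ) ^ (-(δ/L)) with hρ
  have hρpos : 0 < ρ := by
    rw [hρ]
    exact mul_pos (Real.rpow_pos_of_pos hRP0 _) (Real.rpow_pos_of_pos hRM0 _)
  have hρlt : ρ < 1 := by
    refine (Real.log_neg_iff hρpos).mp ?_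
    rw [hρ, Real.log_mul (ne_of_gt (Real.rpow_pos_of_pos hRP0 _))
      (ne_of_gt (Real.rpow_pos_of_pos hRM0 _)),
      Real.log_rpow hRP0, Real.log_rpow hRM0]
    have key : (L:ℝ) * Real.log P < (m:ℝ) * ((L:ℝ) - (k+1)) * Real.log M := by
      have e1 : (L:ℝ)*((m:ℝ)*Real.log M - Real.log P)
          = (m:ℝ)*(L:ℝ)*Real.log M - (L:ℝ)*Real.log P := by ring
      have e2 : (m:ℝ)*((L:ℝ)-(k+1))*Real.log M
          = (m:ℝ)*(L:ℝ)*Real.log M - (m:ℝ)*((k:ℝ)+1)*Real.log M := by ring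
      have e3 : (m:ℝ)*((k:ℝ)+1)*Real.log M = (m:ℝ)*((k:ℕ)+1:ℝ)*Real.log M := by norm_num
      rw [e2]
      rw [e1] at hLε
      linarith
    have heq : (1:ℝ)/m * Real.log P + (-(δ/L)) * Real.log M =
        ((L:ℝ) * Real.log P - (m:ℝ) * ((L:ℝ) - (k+1)) * Real.log M) / ((m:ℝ) * L) := by
      rw [hδval]
      field_simp
      ring
    rw [heq]
    apply div_neg_of_neg_of_pos
    · linarith
    · positivity
  set C : ℝ := (M:ℝ)^m * (M:ℝ) ^ ((3:ℝ)*δ) with hC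
  have hbound : ∀ n : ℕ,
      (((RainGraph (k + 1) n).filter
          (fun G => ∃ H ∈ RainGraph k n, Nonempty (G ≃g H))).card : ℝ) /
        ((RainGraph (k + 1) n).card : ℝ) ≤ C * ρ^n := by
    intro n
    have hnum : (((RainGraph (k + 1) n).filter
        (fun G => ∃ H ∈ RainGraph k n, Nonempty (G ≃g H))).card : ℝ) ≤
        (P:ℝ)^(n/m) * (M:ℝ)^(n - m*(n/m)) := by
      have h1 := numer_le k n
      rw [← hM, ← hm, ← hP] at h1
      exact_mod_cast h1
    have hden : (M:ℝ)^((n/L - 2)*(L - (k+1))) ≤ ((RainGraph (k + 1) n).card : ℝ) := by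
      have h1 := card_rain_ge k L n hLk
      rw [← hM] at h1
      exact_mod_cast h1
    have step1 : (((RainGraph (k + 1) n).filter
        (fun G => ∃ H ∈ RainGraph k n, Nonempty (G ≃g H))).card : ℝ) /
        ((RainGraph (k + 1) n).card : ℝ) ≤
        ((P:ℝ)^(n/m) * (M:ℝ)^(n - m*(n/m))) / (M:ℝ)^((n/L - 2)*(L - (k+1))) :=
      div_le_div₀ (by positivity) hnum (by positivity) hden
    refine le_trans step1 ?_
    have hA : (P:ℝ)^(n/m) ≤ ((P:ℝ) ^ ((1:ℝ)/m))^n := by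
      rw [← Real.rpow_natCast ((P:ℝ) ^ ((1:ℝ)/m)) n, ← Real.rpow_mul (le_of_lt hRP0),
        ← Real.rpow_natCast (P:ℝ) (n/m)]
      apply Real.rpow_le_rpow_of_exponent_le hRP1
      calc ((n/m : ℕ):ℝ) ≤ (n:ℝ)/(m:ℝ) := Nat.cast_div_le
        _ = (1:ℝ)/m * n := by ring
    have hB : (M:ℝ)^(n - m*(n/m)) ≤ (M:ℝ)^m := by
      apply pow_le_pow_right₀ (le_of_lt hRM1)
      have h1 := Nat.div_add_mod n m
      have h2 : n % m < m := Nat.mod_lt n hm0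
      omega
    have hE2 : ((n/L : ℕ):ℝ) - 2 ≤ ((n/L - 2 : ℕ):ℝ) := by
      have h3 : n/L ≤ (n/L - 2) + 2 := by omega
      have h' : ((n/L : ℕ):ℝ) ≤ ((n/L - 2 : ℕ):ℝ) + 2 := by exact_mod_cast h3
      linarith
    have hE3 : (n:ℝ)/L - 1 ≤ ((n/L : ℕ):ℝ) := by
      have h1 := Nat.div_add_mod n L
      have h2 : n % L < L := Nat.mod_lt n hL0'
      have h1' : (L:ℝ) * ((n/L : ℕ):ℝ) + ((n % L : ℕ):ℝ) = (n:ℝ) := by exact_mod_cast h1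
      have h2' : ((n % L : ℕ):ℝ) < (L:ℝ) := by exact_mod_cast h2
      rw [sub_le_iff_le_add, div_le_iff₀ hRL0]
      have e : (((n/L : ℕ):ℝ) + 1) * (L:ℝ) = (L:ℝ) * ((n/L : ℕ):ℝ) + (L:ℝ) := by ring
      rw [e]
      linarith
    have hE1 : (((n/L - 2)*(L - (k+1)) : ℕ):ℝ) = ((n/L - 2 : ℕ):ℝ) * δ := by
      rw [Nat.cast_mul, hδ]
    have hE2' : ((n:ℝ)/L - 3) * δ ≤ (((n/L - 2)*(L - (k+1)) : ℕ):ℝ) := by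
      rw [hE1]
      have s1 : ((n:ℝ)/L - 3) ≤ ((n/L - 2 : ℕ):ℝ) := by linarith
      exact mul_le_mul_of_nonneg_right s1 hδ0
    have hC1 : ((M:ℝ)^((n/L - 2)*(L - (k+1))))⁻¹ ≤
        (M:ℝ) ^ ((3:ℝ)*δ) * ((M:ℝ) ^ (-(δ/L)))^n := by
      have hexp : (M:ℝ) ^ (-((((n/L - 2)*(L - (k+1)) : ℕ)):ℝ)) ≤
          (M:ℝ) ^ ((3:ℝ)*δ + (n:ℝ)*(-(δ/L))) := by
        apply Real.rpow_le_rpow_of_exponent_le (le_of_lt hRM1)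
        have h' : (n:ℝ)*(-(δ/L)) = -((n:ℝ)/L*δ) := by ring
        rw [h']
        have e : ((n:ℝ)/L - 3)*δ = (n:ℝ)/L*δ - 3*δ := by ring
        linarith [hE2']
      calc ((M:ℝ)^((n/L - 2)*(L - (k+1))))⁻¹
          = (M:ℝ) ^ (-((((n/L - 2)*(L - (k+1)) : ℕ)):ℝ)) := by
            rw [← Real.rpow_natCast (M:ℝ) ((n/L - 2)*(L - (k+1))),
              ← Real.rpow_neg (le_of_lt hRM0)]
        _ ≤ (M:ℝ) ^ ((3:ℝ)*δ + (n:ℝ)*(-(δ/L))) := hexp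
        _ = (M:ℝ) ^ ((3:ℝ)*δ) * ((M:ℝ) ^ (-(δ/L)))^n := by
            rw [Real.rpow_add hRM0, ← Real.rpow_natCast ((M:ℝ) ^ (-(δ/L))) n,
              ← Real.rpow_mul (le_of_lt hRM0), mul_comm (-(δ/L)) ((n:ℝ))]
    calc ((P:ℝ)^(n/m) * (M:ℝ)^(n - m*(n/m))) / (M:ℝ)^((n/L - 2)*(L - (k+1)))
        = (P:ℝ)^(n/m) * (M:ℝ)^(n - m*(n/m)) *
            ((M:ℝ)^((n/L - 2)*(L - (k+1))))⁻¹ := div_eq_mul_inv _ _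
      _ ≤ (((P:ℝ) ^ ((1:ℝ)/m))^n * (M:ℝ)^m) *
            ((M:ℝ) ^ ((3:ℝ)*δ) * ((M:ℝ) ^ (-(δ/L)))^n) := by
          apply mul_le_mul (mul_le_mul hA hB (by positivity) (by positivity)) hC1
            (by positivity) (by positivity)
      _ = C * ρ^n := by
          rw [hC, hρ, mul_pow]
          ring
  have htends : Filter.Tendsto (fun n : ℕ => C * ρ^n) Filter.atTop (nhds 0) := by
    have h0 : Filter.Tendsto (fun n : ℕ => ρ^n) Filter.atTop (nhds 0) :=
      tendsto_pow_atTop_nhds_zero_of_lt_one (le_of_lt hρpos) hρlt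
    have h1 := h0.const_mul C
    simpa using h1
  exact squeeze_zero (fun n => by positivity) hbound htends
end
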